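/- arXiv:1206.3392 — 5 statements merged into one kernel-verified Lean document; each statement's English description precedes it below -/
import Mathlib

section
/- Let U and V be independent real-valued random variables, and let + denote addition over ℝ. Then U+V is independent of U and U+V is independent of V if and only if U and V are almost surely constant, i.e., there exist a, b ∈ ℝ such that Pr[U=a] = Pr[V=b] = 1. -/
open MeasureTheory ProbabilityTheory

private lemma indepFun_const_const {Ω : Type*} [MeasurableSpace Ω] (μ : Measure Ω)
    [IsProbabilityMeasure μ] (c c' : ℝ) :
    IndepFun (fun _ : Ω => c) (fun _ : Ω => c') μ := by
  rw [indepFun_iff_measure_inter_preimage_eq_mul]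
  intro s t hs ht
  by_cases h1 : c ∈ s <;> by_cases h2 : c' ∈ t <;>
    simp [Set.preimage_const, h1, h2]

/-- Either the cdf takes a value strictly between 0 and 1 somewhere, or `U` is a.s. constant. -/
private lemma exists_cut_or_const {Ω : Type*} [MeasurableSpace Ω] (μ : Measure Ω)
    [IsProbabilityMeasure μ] (U : Ω → ℝ) (hU : Measurable U) :
    (∃ c : ℝ, 0 < μ {ω | U ω ≤ c} ∧ μ {ω | U ω ≤ c} < 1) ∨ ∃ a : ℝ, μ {ω | U ω = a} = 1 := by
  by_cases h : ∃ c : ℝ, 0 < μ {ω | U ω ≤ c} ∧ μ {ω | U ω ≤ c} < 1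
  · exact Or.inl h
  right
  push_neg at h
  have dich : ∀ c : ℝ, μ {ω | U ω ≤ c} = 0 ∨ μ {ω | U ω ≤ c} = 1 := by
    intro c
    by_cases h0 : μ {ω | U ω ≤ c} = 0
    · exact Or.inl h0
    · exact Or.inr (le_antisymm prob_le_one (h c (pos_iff_ne_zero.mpr h0)))
  have hmeas : ∀ c : ℝ, MeasurableSet {ω | U ω ≤ c} :=
    fun c => measurableSet_le hU measurable_const
  set S : Set ℝ := {c : ℝ | μ {ω | U ω ≤ c} = 1} with hS
  -- S is nonempty
  have hSne : S.Nonempty := by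
    obtain ⟨n, hn⟩ : ∃ n : ℕ, μ {ω | U ω ≤ (n : ℝ)} ≠ 0 := by
      by_contra hc
      push_neg at hc
      have h0 : μ (⋃ n : ℕ, {ω | U ω ≤ (n : ℝ)}) = 0 := measure_iUnion_null hc
      have huniv : (⋃ n : ℕ, {ω | U ω ≤ (n : ℝ)}) = Set.univ := by
        ext ω
        simp only [Set.mem_iUnion, Set.mem_setOf_eq, Set.mem_univ, iff_true]
        exact exists_nat_ge (U ω)
      rw [huniv, measure_univ] at h0
      exact one_ne_zero h0
    exact ⟨(n : ℝ), (dich n).resolve_left hn⟩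
  -- S is bounded below
  obtain ⟨m, hm⟩ : ∃ m : ℕ, μ {ω | U ω ≤ -(m : ℝ)} ≠ 1 := by
    by_contra hc
    push_neg at hc
    have hnull : ∀ m : ℕ, μ {ω | U ω ≤ -(m : ℝ)}ᶜ = 0 := by
      intro m
      rw [measure_compl (hmeas _) (measure_ne_top μ _), hc m, measure_univ, tsub_self]
    have h0 : μ (⋃ m : ℕ, {ω | U ω ≤ -(m : ℝ)}ᶜ) = 0 := measure_iUnion_null hnull
    have huniv : (⋃ m : ℕ, {ω | U ω ≤ -(m : ℝ)}ᶜ) = Set.univ := by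
      ext ω
      simp only [Set.mem_iUnion, Set.mem_compl_iff, Set.mem_setOf_eq, not_le, Set.mem_univ,
        iff_true]
      obtain ⟨m, hm⟩ := exists_nat_gt (-(U ω))
      exact ⟨m, by linarith⟩
    rw [huniv, measure_univ] at h0
    exact one_ne_zero h0
  have hm0 : μ {ω | U ω ≤ -(m : ℝ)} = 0 := (dich _).resolve_right hm
  have hSbdd : BddBelow S := by
    refine ⟨-(m : ℝ), fun c hc => ?_⟩
    by_contra hlt
    push_neg at hlt
    have : μ {ω | U ω ≤ c} ≤ μ {ω | U ω ≤ -(m : ℝ)} :=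
      measure_mono (fun ω hω => le_trans hω hlt.le)
    rw [hc, hm0] at this
    simp at this
  set a := sInf S with ha
  refine ⟨a, ?_⟩
  -- μ {U ≤ a} = 1
  have h1 : μ {ω | U ω ≤ a} = 1 := by
    have hInter : {ω | U ω ≤ a} = ⋂ n : ℕ, {ω | U ω ≤ a + 1 / ((n : ℝ) + 1)} := by
      ext ω
      simp only [Set.mem_iInter, Set.mem_setOf_eq]
      constructor
      · intro hω n
        have : (0:ℝ) < 1 / ((n : ℝ) + 1) := by positivity
        linarith
      · intro hω
        by_contra hlt
        push_neg at hlt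
        obtain ⟨n, hn⟩ := exists_nat_one_div_lt (show (0:ℝ) < U ω - a by linarith)
        have := hω n
        linarith
    have hone : ∀ n : ℕ, μ {ω | U ω ≤ a + 1 / ((n : ℝ) + 1)} = 1 := by
      intro n
      obtain ⟨s, hsS, hslt⟩ := (csInf_lt_iff hSbdd hSne).mp
        (show sInf S < a + 1 / ((n : ℝ) + 1) by
          have : (0:ℝ) < 1 / ((n : ℝ) + 1) := by positivity
          linarith)
      have : μ {ω | U ω ≤ s} ≤ μ {ω | U ω ≤ a + 1 / ((n : ℝ) + 1)} :=
        measure_mono (fun ω hω => le_trans hω hslt.le)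
      rw [hsS] at this
      exact le_antisymm prob_le_one this
    have hcompl : μ (⋃ n : ℕ, {ω | U ω ≤ a + 1 / ((n : ℝ) + 1)}ᶜ) = 0 := by
      refine measure_iUnion_null fun n => ?_
      rw [measure_compl (hmeas _) (measure_ne_top μ _), hone n, measure_univ, tsub_self]
    have : {ω | U ω ≤ a} = (⋃ n : ℕ, {ω | U ω ≤ a + 1 / ((n : ℝ) + 1)}ᶜ)ᶜ := by
      rw [hInter, Set.compl_iUnion]
      simp
    rw [this, measure_compl (by measurability) (measure_ne_top μ _), hcompl, measure_univ,
      tsub_zero]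
  -- μ {U < a} = 0
  have h2 : μ {ω | U ω < a} = 0 := by
    have hUnion : {ω | U ω < a} = ⋃ n : ℕ, {ω | U ω ≤ a - 1 / ((n : ℝ) + 1)} := by
      ext ω
      simp only [Set.mem_iUnion, Set.mem_setOf_eq]
      constructor
      · intro hω
        obtain ⟨n, hn⟩ := exists_nat_one_div_lt (show (0:ℝ) < a - U ω by linarith)
        exact ⟨n, by linarith⟩
      · rintro ⟨n, hn⟩
        have : (0:ℝ) < 1 / ((n : ℝ) + 1) := by positivity
        linarith
    rw [hUnion]
    refine measure_iUnion_null fun n => ?_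
    refine (dich _).resolve_right fun hone => ?_
    have : a ≤ a - 1 / ((n : ℝ) + 1) := csInf_le hSbdd hone
    have h0 : (0:ℝ) < 1 / ((n : ℝ) + 1) := by positivity
    linarith
  have : {ω | U ω = a} = {ω | U ω ≤ a} \ {ω | U ω < a} := by
    ext ω
    simp only [Set.mem_setOf_eq, Set.mem_diff, not_lt]
    constructor
    · intro h; exact ⟨h.le, h.ge⟩
    · intro h; exact le_antisymm h.1 h.2
  rw [this, measure_diff_null h2, h1]

/-- If `U ⟂ V` and `U + V ⟂ U`, then `U` is a.s. constant. -/
private lemma const_of_indep_sum {Ω : Type*} [MeasurableSpace Ω] (μ : Measure Ω)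
    [IsProbabilityMeasure μ] (U V : Ω → ℝ) (hU : Measurable U) (hV : Measurable V)
    (hUV : IndepFun U V μ) (h : IndepFun (fun ω => U ω + V ω) U μ) :
    ∃ a : ℝ, μ {ω | U ω = a} = 1 := by
  rcases exists_cut_or_const μ U hU with ⟨c, hc0, hc1⟩ | h'
  swap
  · exact h'
  exfalso
  -- find δ > 0 with μ {U ≤ c} > 0 and μ {c + δ ≤ U} > 0
  have hgt : μ {ω | U ω ≤ c}ᶜ ≠ 0 := by
    rw [measure_compl (measurableSet_le hU measurable_const) (measure_ne_top μ _), measure_univ]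
    intro hz
    rw [tsub_eq_zero_iff_le] at hz
    exact absurd hz (not_le.mpr hc1)
  obtain ⟨n, hn⟩ : ∃ n : ℕ, μ {ω | c + 1 / ((n : ℝ) + 1) ≤ U ω} ≠ 0 := by
    by_contra hc'
    push_neg at hc'
    have h0 : μ (⋃ n : ℕ, {ω | c + 1 / ((n : ℝ) + 1) ≤ U ω}) = 0 := measure_iUnion_null hc'
    refine hgt (le_antisymm (le_trans (measure_mono ?_) h0.le) zero_le)
    intro ω hω
    simp only [Set.mem_compl_iff, Set.mem_setOf_eq, not_le] at hω
    obtain ⟨n, hn⟩ := exists_nat_one_div_lt (show (0:ℝ) < U ω - c by linarith)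
    exact Set.mem_iUnion.mpr ⟨n, by simp only [Set.mem_setOf_eq]; linarith⟩
  set δ : ℝ := 1 / ((n : ℝ) + 1) with hδdef
  have hδ : (0:ℝ) < δ := by positivity
  set t' : ℝ := c + δ with ht'
  -- the key inequality
  have key : ∀ x : ℝ, μ (V ⁻¹' Set.Iic (x + δ)) ≤ μ (V ⁻¹' Set.Iic x) := by
    intro x
    set W : Ω → ℝ := fun ω => U ω + V ω with hW
    have hp : μ (U ⁻¹' Set.Iic c) ≠ 0 := hc0.ne'
    have hq : μ (U ⁻¹' Set.Ici t') ≠ 0 := hn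
    have step1 : μ (V ⁻¹' Set.Iic (x + δ)) ≤ μ (W ⁻¹' Set.Iic (x + t')) := by
      have e1 := hUV.symm.measure_inter_preimage_eq_mul (Set.Iic (x + δ)) (Set.Iic c)
        measurableSet_Iic measurableSet_Iic
      have e2 := h.measure_inter_preimage_eq_mul (Set.Iic (x + t')) (Set.Iic c)
        measurableSet_Iic measurableSet_Iic
      have hsub : V ⁻¹' Set.Iic (x + δ) ∩ U ⁻¹' Set.Iic c ⊆
          W ⁻¹' Set.Iic (x + t') ∩ U ⁻¹' Set.Iic c := by
        rintro ω ⟨h1, h2⟩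
        have h1' : V ω ≤ x + δ := h1
        have h2' : U ω ≤ c := h2
        exact ⟨show U ω + V ω ≤ x + (c + δ) by linarith, h2⟩
      have hle := measure_mono (μ := μ) hsub
      rw [e1, e2] at hle
      exact (ENNReal.mul_le_mul_iff_left hp (measure_ne_top μ _)).mp hle
    have step2 : μ (W ⁻¹' Set.Iic (x + t')) ≤ μ (V ⁻¹' Set.Iic x) := by
      have e1 := h.measure_inter_preimage_eq_mul (Set.Iic (x + t')) (Set.Ici t')
        measurableSet_Iic measurableSet_Ici
      have e2 := hUV.symm.measure_inter_preimage_eq_mul (Set.Iic x) (Set.Ici t')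
        measurableSet_Iic measurableSet_Ici
      have hsub : W ⁻¹' Set.Iic (x + t') ∩ U ⁻¹' Set.Ici t' ⊆
          V ⁻¹' Set.Iic x ∩ U ⁻¹' Set.Ici t' := by
        rintro ω ⟨h1, h2⟩
        have h1' : U ω + V ω ≤ x + t' := h1
        have h2' : t' ≤ U ω := h2
        exact ⟨show V ω ≤ x by linarith, h2⟩
      have hle := measure_mono (μ := μ) hsub
      rw [e1, e2] at hle
      exact (ENNReal.mul_le_mul_iff_left hq (measure_ne_top μ _)).mp hle
    exact le_trans step1 step2
  -- iterate
  have key2 : ∀ (k : ℕ) (x : ℝ), μ (V ⁻¹' Set.Iic (x + k * δ)) ≤ μ (V ⁻¹' Set.Iic x) := by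
    intro k
    induction k with
    | zero => intro x; simp
    | succ k ih =>
        intro x
        have harith : x + ((k : ℝ) + 1) * δ = (x + (k : ℝ) * δ) + δ := by ring
        calc μ (V ⁻¹' Set.Iic (x + ((k : ℕ) + 1 : ℕ) * δ))
            = μ (V ⁻¹' Set.Iic ((x + (k : ℝ) * δ) + δ)) := by push_cast; rw [harith]
          _ ≤ μ (V ⁻¹' Set.Iic (x + (k : ℝ) * δ)) := key _
          _ ≤ μ (V ⁻¹' Set.Iic x) := ih x
  -- hence all cdf values of V are 1
  have hall : ∀ x : ℝ, μ (V ⁻¹' Set.Iic x) = 1 := by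
    intro x
    refine le_antisymm prob_le_one ?_
    have hmono : Monotone (fun k : ℕ => V ⁻¹' Set.Iic (x + k * δ)) := by
      intro i j hij ω hω
      simp only [Set.mem_preimage, Set.mem_Iic] at *
      have : (i : ℝ) * δ ≤ (j : ℝ) * δ := by
        have : (i : ℝ) ≤ (j : ℝ) := Nat.cast_le.mpr hij
        nlinarith
      linarith
    have huniv : (⋃ k : ℕ, V ⁻¹' Set.Iic (x + k * δ)) = Set.univ := by
      ext ω
      simp only [Set.mem_iUnion, Set.mem_preimage, Set.mem_Iic, Set.mem_univ, iff_true]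
      obtain ⟨k, hk⟩ := exists_nat_gt ((V ω - x) / δ)
      refine ⟨k, ?_⟩
      have : V ω - x < k * δ := by
        rw [div_lt_iff₀ hδ] at hk
        linarith
      linarith
    have := (hmono.directed_le).measure_iUnion (μ := μ)
    rw [huniv, measure_univ] at this
    rw [this]
    exact iSup_le fun k => key2 k x
  -- contradiction
  have hnull : ∀ m : ℕ, μ (V ⁻¹' Set.Iic (-(m : ℝ)))ᶜ = 0 := by
    intro m
    rw [measure_compl (measurableSet_Iic.preimage hV) (measure_ne_top μ _), hall, measure_univ,
      tsub_self]
  have h0 : μ (⋃ m : ℕ, (V ⁻¹' Set.Iic (-(m : ℝ)))ᶜ) = 0 := measure_iUnion_null hnull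
  have huniv : (⋃ m : ℕ, (V ⁻¹' Set.Iic (-(m : ℝ)))ᶜ) = Set.univ := by
    ext ω
    simp only [Set.mem_iUnion, Set.mem_compl_iff, Set.mem_preimage, Set.mem_Iic, not_le,
      Set.mem_univ, iff_true]
    obtain ⟨m, hm⟩ := exists_nat_gt (-(V ω))
    exact ⟨m, by linarith⟩
  rw [huniv, measure_univ] at h0
  exact one_ne_zero h0

/-- Let `U` and `V` be independent real-valued random variables. Then
`U + V` is independent of `U` and `U + V` is independent of `V` if and only if `U` and `V`
are almost surely constant, i.e. there exist `a b : ℝ` with `Pr[U = a] = Pr[V = b] = 1`. -/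
theorem sum_indep_of_each_iff_as_const
    {Ω : Type*} [MeasurableSpace Ω] (μ : Measure Ω) [IsProbabilityMeasure μ]
    (U V : Ω → ℝ) (hU : Measurable U) (hV : Measurable V)
    (hUV : IndepFun U V μ) :
    (IndepFun (fun ω => U ω + V ω) U μ ∧ IndepFun (fun ω => U ω + V ω) V μ) ↔
      ∃ a b : ℝ, μ {ω | U ω = a} = 1 ∧ μ {ω | V ω = b} = 1 := by
  constructor
  · rintro ⟨h1, h2⟩
    obtain ⟨a, ha⟩ := const_of_indep_sum μ U V hU hV hUV h1
    have h2' : IndepFun (fun ω => V ω + U ω) V μ := by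
      have : (fun ω => V ω + U ω) = fun ω => U ω + V ω := by funext ω; ring
      rw [this]
      exact h2
    obtain ⟨b, hb⟩ := const_of_indep_sum μ V U hV hU hUV.symm h2'
    exact ⟨a, b, ha, hb⟩
  · rintro ⟨a, b, ha, hb⟩
    have haU : U =ᵐ[μ] fun _ => a := by
      rw [Filter.EventuallyEq, ae_iff]
      have : {ω | ¬ U ω = a} = {ω | U ω = a}ᶜ := rfl
      rw [this, measure_compl (show MeasurableSet {ω | U ω = a} from hU (measurableSet_singleton a)) (measure_ne_top μ _), ha,
        measure_univ, tsub_self]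
    have hbV : V =ᵐ[μ] fun _ => b := by
      rw [Filter.EventuallyEq, ae_iff]
      have : {ω | ¬ V ω = b} = {ω | V ω = b}ᶜ := rfl
      rw [this, measure_compl (show MeasurableSet {ω | V ω = b} from hV (measurableSet_singleton b)) (measure_ne_top μ _), hb,
        measure_univ, tsub_self]
    have hW : (fun _ : Ω => a + b) =ᵐ[μ] fun ω => U ω + V ω := by
      filter_upwards [haU, hbV] with ω h1 h2
      simp [h1, h2]
    constructor
    · exact (indepFun_const_const μ (a + b) a).congr hW haU.symm
    · exact (indepFun_const_const μ (a + b) b).congr hW hbV.symm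
end

section
/- Let X and Y be i.i.d. uniform {0,1}-valued random variables. Suppose p_{U|0}, p_{U|1}, p_{V|0}, p_{V|1} are probability mass functions on ℤ such that (i) p_{U|0}(k) = p_{V|0}(k) = 0 for all odd k ∈ ℤ and p_{U|1}(k) = p_{V|1}(k) = 0 for all even k ∈ ℤ, and (ii) with φ_U = (1/2)(φ_{U|0} + φ_{U|1}) and φ_V = (1/2)(φ_{V|0} + φ_{V|1}), one has φ_U φ_V = φ_{U|a} φ_V = φ_U φ_{V|a} for a ∈ {0,1}. Then the random variables (U, V, X, Y) with joint pmf p_{UVXY}(k, l, a, b) = (1/4) p_{U|a}(k) p_{V|b}(l) for k, l ∈ ℤ and a, b ∈ {0,1} satisfy: (S1) (U, X) is independent of (V, Y); (S2) U+V is independent of X and U+V is independent of Y; (S3) X⊕Y (the modulo-2 sum) almost surely equals the parity of U+V. -/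
open MeasureTheory ProbabilityTheory Complex

/-- The characteristic function of a pmf `p` on `ℤ`: `φ(t) = Σ_{k ∈ ℤ} p(k) e^{ikt}`. -/
noncomputable def charFunZ (p : ℤ → ℝ) (t : ℝ) : ℂ :=
  ∑' k : ℤ, (p k : ℂ) * Complex.exp (Complex.I * (k : ℂ) * (t : ℂ))

namespace SecureXorAux

open Real

lemma norm_cexp_I (x : ℝ) : ‖Complex.exp (Complex.I * x)‖ = 1 := by
  simp [Complex.norm_exp]

lemma norm_term (c : ℤ → ℝ) (k : ℤ) (t : ℝ) :
    ‖(c k : ℂ) * Complex.exp (Complex.I * k * t)‖ = |c k| := by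
  rw [norm_mul, show Complex.I * (k:ℂ) * (t:ℂ) = Complex.I * ((k*t : ℝ) : ℂ) by push_cast; ring,
    norm_cexp_I, mul_one, Complex.norm_real, Real.norm_eq_abs]

lemma summable_cexp (c : ℤ → ℝ) (hc : Summable c) (t : ℝ) :
    Summable (fun k : ℤ => (c k : ℂ) * Complex.exp (Complex.I * k * t)) :=
  Summable.of_norm (by simp only [norm_term]; exact hc.abs)

lemma integral_exp_int (n : ℤ) :
    ∫ t in (-π)..π, Complex.exp (Complex.I*n*t) = if n = 0 then (2*π : ℝ) else 0 := by
  rcases eq_or_ne n 0 with h | h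
  · subst h; simp; norm_num [two_mul]
  · rw [if_neg h, integral_exp_mul_complex (by simp [h, Complex.ext_iff])]
    have h1 : Complex.I * n * π = n * (π * Complex.I) := by ring
    have h2 : Complex.I * n * ((-π : ℝ) : ℂ) = ((-n : ℤ) : ℂ) * (π * Complex.I) := by
      push_cast; ring
    rw [h1, h2, Complex.exp_int_mul, Complex.exp_int_mul, Complex.exp_pi_mul_I]
    have : ((-1 : ℂ)) ^ (-n) = (-1) ^ n := by
      rw [zpow_neg]
      exact inv_eq_of_mul_eq_one_left
        (by rw [← zpow_add₀ (by norm_num : (-1:ℂ) ≠ 0), show n+n = 2*n by ring, zpow_mul]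
            norm_num)
    rw [this]; simp

lemma fourier_unique (c : ℤ → ℝ) (hc : Summable c)
    (h : ∀ t : ℝ, charFunZ c t = 0) (m : ℤ) : c m = 0 := by
  set f : ℤ → ℝ → ℂ := fun k t => (c k : ℂ) * Complex.exp (Complex.I * (k - m) * t) with hf
  have hzero : ∀ t : ℝ, ∑' k : ℤ, f k t = 0 := by
    intro t
    have : ∀ k : ℤ, f k t
        = ((c k : ℂ) * Complex.exp (Complex.I * k * t)) * Complex.exp (Complex.I * (-m) * t) := by
      intro k
      rw [mul_assoc, ← Complex.exp_add, hf]
      push_cast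
      ring_nf
    rw [funext this, tsum_mul_right,
      show (∑' k : ℤ, (c k : ℂ) * Complex.exp (Complex.I * k * t)) = charFunZ c t from rfl,
      h t, zero_mul]
  have hmeas : ∀ k : ℤ, AEStronglyMeasurable (f k) (volume.restrict (Set.Ioc (-π) π)) := by
    intro k
    exact (Continuous.aestronglyMeasurable (by fun_prop))
  have hnorm : ∀ k : ℤ, ∀ t : ℝ, (‖f k t‖₊ : ENNReal) = (‖c k‖₊ : ENNReal) := by
    intro k t
    congr 1
    ext
    rw [coe_nnnorm, coe_nnnorm, hf]
    rw [norm_mul,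
      show Complex.I * ((k:ℂ) - m) * (t:ℂ) = Complex.I * ((((k - m : ℤ)) * t : ℝ) : ℂ) by
        push_cast; ring,
      norm_cexp_I, mul_one, Complex.norm_real]
  have hlin : ∑' k : ℤ, ∫⁻ t, ‖f k t‖₊ ∂(volume.restrict (Set.Ioc (-π) π)) ≠ ⊤ := by
    have : ∀ k : ℤ, ∫⁻ t, ‖f k t‖₊ ∂(volume.restrict (Set.Ioc (-π) π))
        = (‖c k‖₊ : ENNReal) * ENNReal.ofReal (2*π) := by
      intro k
      simp_rw [hnorm k]
      rw [lintegral_const, Measure.restrict_apply_univ, Real.volume_Ioc]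
      norm_num [two_mul]
    rw [funext this, ENNReal.tsum_mul_right]
    apply ENNReal.mul_ne_top _ (by exact ENNReal.ofReal_ne_top)
    rw [ENNReal.tsum_coe_ne_top_iff_summable, ← NNReal.summable_coe]
    simpa [coe_nnnorm, Complex.norm_real, Real.norm_eq_abs] using hc.abs
  have hswap := MeasureTheory.integral_tsum hmeas hlin
  simp_rw [hzero] at hswap
  rw [integral_zero] at hswap
  have hint : ∀ k : ℤ, ∫ t in Set.Ioc (-π) π, f k t
      = (c k : ℂ) * (if k = m then ((2*π : ℝ):ℂ) else 0) := by
    intro k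
    rw [← intervalIntegral.integral_of_le (by linarith [pi_pos] : -π ≤ π)]
    rw [intervalIntegral.integral_const_mul]
    congr 1
    have h0 : ((k:ℂ) - m) = ((k - m : ℤ) : ℂ) := by push_cast; ring
    rw [show (fun t : ℝ => Complex.exp (Complex.I * ((k:ℂ) - m) * t))
        = fun t : ℝ => Complex.exp (Complex.I * ((k - m : ℤ):ℂ) * t) from by simp_rw [h0]]
    rw [integral_exp_int (k - m)]
    by_cases hkm : k = m
    · rw [if_pos (by omega), if_pos hkm]
    · rw [if_neg (by omega), if_neg hkm]; simp
  rw [funext hint] at hswap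
  rw [tsum_eq_single m (by intro k hk; simp only [if_neg hk, mul_zero])] at hswap
  rw [if_pos rfl] at hswap
  have h2 : c m * (2*π) = 0 := by exact_mod_cast hswap.symm
  have h3 : (2*π) ≠ 0 := by positivity
  exact (mul_eq_zero.1 h2).resolve_right h3

def shearZ : ℤ × ℤ ≃ ℤ × ℤ where
  toFun p := (p.1 + p.2, p.1)
  invFun q := (q.2, q.1 - q.2)
  left_inv := by rintro ⟨k, l⟩; simp
  right_inv := by rintro ⟨m, k⟩; simp

lemma summable_prod_abs (c d : ℤ → ℝ) (hc : Summable c) (hd : Summable d) :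
    Summable (fun p : ℤ × ℤ => c p.1 * d p.2) := by
  apply Summable.of_norm
  simp only [norm_mul, Real.norm_eq_abs]
  exact Summable.mul_of_nonneg (f := fun k : ℤ => |c k|) (g := fun k : ℤ => |d k|)
    hc.abs hd.abs (fun k => abs_nonneg (c k)) (fun k => abs_nonneg (d k))

lemma summable_shear (c d : ℤ → ℝ) (hc : Summable c) (hd : Summable d) :
    Summable (fun p : ℤ × ℤ => c p.2 * d (p.1 - p.2)) := by
  have he : ((fun p : ℤ × ℤ => c p.2 * d (p.1 - p.2)) ∘ shearZ)
      = fun p : ℤ × ℤ => c p.1 * d p.2 := by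
    funext p; simp [shearZ, Function.comp]
  exact shearZ.summable_iff.1 (he ▸ summable_prod_abs c d hc hd)

lemma summable_conv_inner (c d : ℤ → ℝ) (hc : Summable c) (hd : Summable d) (m : ℤ) :
    Summable (fun k : ℤ => c k * d (m - k)) :=
  (summable_shear c d hc hd).prod_factor m

lemma summable_conv (c d : ℤ → ℝ) (hc : Summable c) (hd : Summable d) :
    Summable (fun m : ℤ => ∑' k : ℤ, c k * d (m - k)) := by
  have hf := summable_shear c d hc hd
  exact ⟨_, HasSum.prod_fiberwise hf.hasSum (fun m => (hf.prod_factor m).hasSum)⟩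

lemma charFunZ_conv (c d : ℤ → ℝ) (hc : Summable c) (hd : Summable d) (t : ℝ) :
    charFunZ (fun m => ∑' k : ℤ, c k * d (m - k)) t = charFunZ c t * charFunZ d t := by
  classical
  have hGsum : Summable (fun p : ℤ × ℤ =>
      ((c p.2 * d (p.1 - p.2) : ℝ) : ℂ) * Complex.exp (Complex.I * p.1 * t)) := by
    apply Summable.of_norm
    have hn : ∀ p : ℤ × ℤ, ‖((c p.2 * d (p.1 - p.2) : ℝ) : ℂ) * Complex.exp (Complex.I * p.1 * t)‖
        = |c p.2 * d (p.1 - p.2)| := fun p => norm_term (fun m => c p.2 * d (m - p.2)) p.1 t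
    simp only [hn]
    exact (summable_shear c d hc hd).abs
  have step1 : charFunZ (fun m => ∑' k : ℤ, c k * d (m - k)) t
      = ∑' m : ℤ, ∑' k : ℤ, ((c k * d (m - k) : ℝ) : ℂ) * Complex.exp (Complex.I * m * t) := by
    unfold charFunZ
    apply tsum_congr
    intro m
    rw [Complex.ofReal_tsum, ← tsum_mul_right]
  have step2 : (∑' m : ℤ, ∑' k : ℤ, ((c k * d (m - k) : ℝ) : ℂ) * Complex.exp (Complex.I * m * t))
      = ∑' p : ℤ × ℤ, ((c p.2 * d (p.1 - p.2) : ℝ) : ℂ) * Complex.exp (Complex.I * p.1 * t) :=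
    (Summable.tsum_prod' hGsum (fun m => hGsum.prod_factor m)).symm
  have step3 : (∑' p : ℤ × ℤ, ((c p.2 * d (p.1 - p.2) : ℝ) : ℂ) * Complex.exp (Complex.I * p.1 * t))
      = ∑' q : ℤ × ℤ,
      (((c q.1 : ℂ) * Complex.exp (Complex.I * q.1 * t)) *
      ((d q.2 : ℂ) * Complex.exp (Complex.I * q.2 * t))) := by
    rw [← Equiv.tsum_eq shearZ
      (fun p : ℤ × ℤ => ((c p.2 * d (p.1 - p.2) : ℝ) : ℂ) * Complex.exp (Complex.I * p.1 * t))]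
    apply tsum_congr
    intro q
    show ((c (q.1 + q.2, q.1).2 * d ((q.1 + q.2, q.1).1 - (q.1 + q.2, q.1).2) : ℝ) : ℂ)
        * Complex.exp (Complex.I * ((q.1 + q.2, q.1).1 : ℤ) * t) = _
    have h1 : (q.1 + q.2, q.1).2 = q.1 := rfl
    have h2 : ((q.1 + q.2, q.1).1 : ℤ) = q.1 + q.2 := rfl
    rw [h1, h2, show q.1 + q.2 - q.1 = q.2 by ring]
    have hexp : Complex.exp (Complex.I * ((q.1 + q.2 : ℤ) : ℂ) * t)
        = Complex.exp (Complex.I * q.1 * t) * Complex.exp (Complex.I * q.2 * t) := by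
      rw [← Complex.exp_add]
      congr 1
      push_cast
      ring
    push_cast at hexp ⊢
    rw [hexp]
    ring
  have step4 : (∑' q : ℤ × ℤ,
      (((c q.1 : ℂ) * Complex.exp (Complex.I * q.1 * t)) *
      ((d q.2 : ℂ) * Complex.exp (Complex.I * q.2 * t)))) = charFunZ c t * charFunZ d t := by
    have h4 := tsum_mul_tsum_of_summable_norm
      (f := fun k : ℤ => (c k : ℂ) * Complex.exp (Complex.I * k * t))
      (g := fun k : ℤ => (d k : ℂ) * Complex.exp (Complex.I * k * t))
      (by simp only [norm_term]; exact hc.abs) (by simp only [norm_term]; exact hd.abs)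
    unfold charFunZ
    exact h4.symm
  rw [step1, step2, step3, step4]

lemma charFunZ_sub (c d : ℤ → ℝ) (hc : Summable c) (hd : Summable d) (t : ℝ) :
    charFunZ (fun k => c k - d k) t = charFunZ c t - charFunZ d t := by
  unfold charFunZ
  rw [← Summable.tsum_sub (summable_cexp c hc t) (summable_cexp d hd t)]
  apply tsum_congr
  intro k
  push_cast
  ring

lemma charFunZ_add (c d : ℤ → ℝ) (hc : Summable c) (hd : Summable d) (t : ℝ) :
    charFunZ (fun k => c k + d k) t = charFunZ c t + charFunZ d t := by
  unfold charFunZ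
  rw [← Summable.tsum_add (summable_cexp c hc t) (summable_cexp d hd t)]
  apply tsum_congr
  intro k
  push_cast
  ring

lemma charFunZ_two_mul (c : ℤ → ℝ) (t : ℝ) :
    charFunZ (fun k => 2 * c k) t = 2 * charFunZ c t := by
  unfold charFunZ
  rw [← tsum_mul_left]
  apply tsum_congr
  intro k
  push_cast
  ring

lemma conv_eq_of_char (c d e : ℤ → ℝ) (hc : Summable c) (hd : Summable d) (he : Summable e)
    (h : ∀ t : ℝ, charFunZ c t * charFunZ e t = charFunZ d t * charFunZ e t) (m : ℤ) :
    ∑' k : ℤ, c k * e (m - k) = ∑' k : ℤ, d k * e (m - k) := by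
  have hcd : Summable (fun k => c k - d k) := hc.sub hd
  have hchar0 : ∀ t : ℝ, charFunZ (fun m => ∑' k : ℤ, (c k - d k) * e (m - k)) t = 0 := by
    intro t
    rw [charFunZ_conv _ _ hcd he, charFunZ_sub c d hc hd, sub_mul, h t, sub_self]
  have h0 := fourier_unique _ (summable_conv _ _ hcd he) hchar0 m
  have hexp : ∑' k : ℤ, (c k - d k) * e (m - k)
      = (∑' k : ℤ, c k * e (m - k)) - ∑' k : ℤ, d k * e (m - k) := by
    rw [← Summable.tsum_sub (summable_conv_inner c e hc he m) (summable_conv_inner d e hd he m)]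
    apply tsum_congr
    intro k
    ring
  rw [hexp] at h0
  linarith [h0]

lemma pairwise_disjoint_preimage {ι Ω α : Type*} (f : Ω → α) (g : ι → α)
    (hg : Function.Injective g) (T : ι → Set Ω) (hT : ∀ i, T i ⊆ f ⁻¹' {g i}) :
    Pairwise (Function.onFun Disjoint T) := by
  intro i j hij
  rw [Function.onFun, Set.disjoint_left]
  intro x hxi hxj
  have h1 : f x = g i := hT i hxi
  have h2 : f x = g j := hT j hxj
  exact hij (hg (h1 ▸ h2))

lemma indepFun_of_singletons {Ω α β : Type*} [MeasurableSpace Ω]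
    [MeasurableSpace α] [MeasurableSingletonClass α] [Countable α]
    [MeasurableSpace β] [MeasurableSingletonClass β] [Countable β]
    (μ : Measure Ω) (f : Ω → α) (g : Ω → β) (hf : Measurable f) (hg : Measurable g)
    (h : ∀ a b, μ (f ⁻¹' {a} ∩ g ⁻¹' {b}) = μ (f ⁻¹' {a}) * μ (g ⁻¹' {b})) :
    IndepFun f g μ := by
  rw [indepFun_iff_measure_inter_preimage_eq_mul]
  intro s t _ _
  have hfs : μ (f ⁻¹' s) = ∑' a : s, μ (f ⁻¹' {(a : α)}) := by
    rw [show f ⁻¹' s = ⋃ a : s, f ⁻¹' {(a : α)} by ext x; simp]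
    exact measure_iUnion
      (pairwise_disjoint_preimage f (fun a : s => (a : α)) Subtype.val_injective _
        (fun i => subset_rfl))
      (fun a => hf (measurableSet_singleton _))
  have hgt : μ (g ⁻¹' t) = ∑' b : t, μ (g ⁻¹' {(b : β)}) := by
    rw [show g ⁻¹' t = ⋃ b : t, g ⁻¹' {(b : β)} by ext x; simp]
    exact measure_iUnion
      (pairwise_disjoint_preimage g (fun b : t => (b : β)) Subtype.val_injective _
        (fun i => subset_rfl))
      (fun b => hg (measurableSet_singleton _))
  have hint : μ (f ⁻¹' s ∩ g ⁻¹' t)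
      = ∑' p : s × t, μ (f ⁻¹' {(p.1 : α)} ∩ g ⁻¹' {(p.2 : β)}) := by
    rw [show f ⁻¹' s ∩ g ⁻¹' t = ⋃ p : s × t, (f ⁻¹' {(p.1 : α)} ∩ g ⁻¹' {(p.2 : β)}) by
      ext x; simp]
    exact measure_iUnion
      (pairwise_disjoint_preimage (fun ω => (f ω, g ω))
        (fun p : s × t => ((p.1 : α), (p.2 : β)))
        (fun p q hpq => by
          have h1 := congrArg Prod.fst hpq
          have h2 := congrArg Prod.snd hpq
          simp only at h1 h2
          exact Prod.ext (Subtype.ext h1) (Subtype.ext h2))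
        _
        (fun p x hx => by
          simp only [Set.mem_inter_iff, Set.mem_preimage, Set.mem_singleton_iff] at hx ⊢
          exact Prod.ext hx.1 hx.2))
      (fun p => (hf (measurableSet_singleton _)).inter (hg (measurableSet_singleton _)))
  rw [hint, hfs, hgt, ENNReal.tsum_prod']
  calc ∑' (a : s) (b : t), μ (f ⁻¹' {(a : α)} ∩ g ⁻¹' {(b : β)})
      = ∑' (a : s) (b : t), μ (f ⁻¹' {(a : α)}) * μ (g ⁻¹' {(b : β)}) := by
        apply tsum_congr; intro a; apply tsum_congr; intro b; exact h a b
    _ = ∑' (a : s), μ (f ⁻¹' {(a : α)}) * ∑' (b : t), μ (g ⁻¹' {(b : β)}) := by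
        apply tsum_congr; intro a; rw [ENNReal.tsum_mul_left]
    _ = (∑' (a : s), μ (f ⁻¹' {(a : α)})) * ∑' (b : t), μ (g ⁻¹' {(b : β)}) := by
        rw [ENNReal.tsum_mul_right]

lemma tsum_zmod2 (f : ZMod 2 → ENNReal) : ∑' b : ZMod 2, f b = f 0 + f 1 := by
  rw [tsum_fintype, show (Finset.univ : Finset (ZMod 2)) = {0, 1} from rfl,
    Finset.sum_insert (by decide), Finset.sum_singleton]

lemma zmod2_cases (a : ZMod 2) : a = 0 ∨ a = 1 := by revert a; decide

lemma even_of_cast_zero (k : ℤ) (hk : (k : ZMod 2) = 0) : Even k := by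
  rw [ZMod.intCast_zmod_eq_zero_iff_dvd] at hk
  exact even_iff_two_dvd.2 (by exact_mod_cast hk)

lemma odd_of_cast_one (k : ℤ) (hk : (k : ZMod 2) = 1) : Odd k := by
  rw [← Int.not_even_iff_odd]
  intro h
  have : ((2:ℕ):ℤ) ∣ k := by exact_mod_cast even_iff_two_dvd.1 h
  rw [← ZMod.intCast_zmod_eq_zero_iff_dvd k 2, hk] at this
  exact one_ne_zero this

end SecureXorAux

open SecureXorAux in
/-- Let `X, Y` be i.i.d. uniform `{0,1}`-valued random variables, and suppose
`p_{U|0}, p_{U|1}, p_{V|0}, p_{V|1}` are pmfs on `ℤ` such that (i) `p_{U|0}` and `p_{V|0}`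
vanish on odd integers and `p_{U|1}` and `p_{V|1}` vanish on even integers, and (ii) with
`φ_U = (1/2)(φ_{U|0} + φ_{U|1})`, `φ_V = (1/2)(φ_{V|0} + φ_{V|1})`, one has
`φ_U φ_V = φ_{U|a} φ_V = φ_U φ_{V|a}` for `a ∈ {0,1}`.  Then random variables `(U, V, X, Y)`
with joint pmf `p(k,l,a,b) = (1/4) p_{U|a}(k) p_{V|b}(l)` satisfy:
(S1) `(U,X) ⫫ (V,Y)`; (S2) `U+V ⫫ X` and `U+V ⫫ Y`; and
(S3) `X ⊕ Y` a.s. equals the parity of `U + V`. -/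
theorem secure_xor_of_pmf_conditions
    {Ω : Type*} [MeasurableSpace Ω] (μ : Measure Ω) [IsProbabilityMeasure μ]
    (X Y : Ω → ZMod 2) (U V : Ω → ℤ)
    (hX : Measurable X) (hY : Measurable Y) (hUm : Measurable U) (hVm : Measurable V)
    -- X and Y are i.i.d. uniform on {0,1}
    (hXY : IndepFun X Y μ)
    (hXunif : ∀ a : ZMod 2, μ (X ⁻¹' {a}) = 1 / 2)
    (hYunif : ∀ a : ZMod 2, μ (Y ⁻¹' {a}) = 1 / 2)
    -- the conditional pmfs
    (pU pV : ZMod 2 → ℤ → ℝ)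
    (hpUnn : ∀ a k, 0 ≤ pU a k) (hpVnn : ∀ a k, 0 ≤ pV a k)
    (hpUsum : ∀ a, HasSum (pU a) 1) (hpVsum : ∀ a, HasSum (pV a) 1)
    -- (i): support/parity conditions
    (hpar0 : ∀ k : ℤ, Odd k → pU 0 k = 0 ∧ pV 0 k = 0)
    (hpar1 : ∀ k : ℤ, Even k → pU 1 k = 0 ∧ pV 1 k = 0)
    -- (ii): the characteristic-function conditions
    (hchar : ∀ a : ZMod 2, ∀ t : ℝ,
      ((1 / 2 : ℂ) * (charFunZ (pU 0) t + charFunZ (pU 1) t)) *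
          ((1 / 2 : ℂ) * (charFunZ (pV 0) t + charFunZ (pV 1) t)) =
        charFunZ (pU a) t * ((1 / 2 : ℂ) * (charFunZ (pV 0) t + charFunZ (pV 1) t)) ∧
      ((1 / 2 : ℂ) * (charFunZ (pU 0) t + charFunZ (pU 1) t)) *
          ((1 / 2 : ℂ) * (charFunZ (pV 0) t + charFunZ (pV 1) t)) =
        ((1 / 2 : ℂ) * (charFunZ (pU 0) t + charFunZ (pU 1) t)) * charFunZ (pV a) t)
    -- the joint pmf of (U, V, X, Y)
    (hjoint : ∀ (k l : ℤ) (a b : ZMod 2),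
      μ (U ⁻¹' {k} ∩ V ⁻¹' {l} ∩ X ⁻¹' {a} ∩ Y ⁻¹' {b}) =
        ENNReal.ofReal ((1 / 4) * pU a k * pV b l)) :
    -- (S1)
    IndepFun (fun ω => (U ω, X ω)) (fun ω => (V ω, Y ω)) μ ∧
    -- (S2)
    IndepFun (fun ω => U ω + V ω) X μ ∧ IndepFun (fun ω => U ω + V ω) Y μ ∧
    -- (S3)
    (∀ᵐ ω ∂μ, X ω + Y ω = ((U ω + V ω : ℤ) : ZMod 2)) := by
  -- summability facts
  have hSUa : ∀ a, Summable (pU a) := fun a => (hpUsum a).summable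
  have hSVa : ∀ a, Summable (pV a) := fun a => (hpVsum a).summable
  have hsUsum : HasSum (fun k => pU 0 k + pU 1 k) 2 := by
    have := (hpUsum 0).add (hpUsum 1); norm_num at this; exact this
  have hsVsum : HasSum (fun l => pV 0 l + pV 1 l) 2 := by
    have := (hpVsum 0).add (hpVsum 1); norm_num at this; exact this
  have hSU : Summable (fun k => pU 0 k + pU 1 k) := hsUsum.summable
  have hSV : Summable (fun l => pV 0 l + pV 1 l) := hsVsum.summable
  -- measurability of singleton preimages
  have mU : ∀ k : ℤ, MeasurableSet (U ⁻¹' {k}) := fun k => hUm (measurableSet_singleton k)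
  have mV : ∀ l : ℤ, MeasurableSet (V ⁻¹' {l}) := fun l => hVm (measurableSet_singleton l)
  have mX : ∀ a : ZMod 2, MeasurableSet (X ⁻¹' {a}) := fun a => hX (measurableSet_singleton a)
  have mY : ∀ b : ZMod 2, MeasurableSet (Y ⁻¹' {b}) := fun b => hY (measurableSet_singleton b)
  -- marginal over Y
  have hUVX : ∀ (k l : ℤ) (a : ZMod 2), μ (U ⁻¹' {k} ∩ V ⁻¹' {l} ∩ X ⁻¹' {a})
      = ENNReal.ofReal (1 / 4 * pU a k * (pV 0 l + pV 1 l)) := by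
    intro k l a
    rw [show U ⁻¹' {k} ∩ V ⁻¹' {l} ∩ X ⁻¹' {a}
        = ⋃ b : ZMod 2, (U ⁻¹' {k} ∩ V ⁻¹' {l} ∩ X ⁻¹' {a} ∩ Y ⁻¹' {b}) from by
      ext ω
      simp only [Set.mem_iUnion, Set.mem_inter_iff, Set.mem_preimage, Set.mem_singleton_iff]
      constructor
      · rintro ⟨⟨h1, h2⟩, h3⟩; exact ⟨Y ω, ⟨⟨h1, h2⟩, h3⟩, rfl⟩
      · rintro ⟨b, ⟨⟨⟨h1, h2⟩, h3⟩, h4⟩⟩; exact ⟨⟨h1, h2⟩, h3⟩]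
    rw [measure_iUnion
      (pairwise_disjoint_preimage Y id (fun x y h => h) _ (fun b ω hω => hω.2))
      (fun b => (((mU k).inter (mV l)).inter (mX a)).inter (mY b))]
    rw [tsum_zmod2 (fun b => μ (U ⁻¹' {k} ∩ V ⁻¹' {l} ∩ X ⁻¹' {a} ∩ Y ⁻¹' {b})),
      hjoint, hjoint,
      ← ENNReal.ofReal_add
        (mul_nonneg (mul_nonneg (by norm_num) (hpUnn a k)) (hpVnn 0 l))
        (mul_nonneg (mul_nonneg (by norm_num) (hpUnn a k)) (hpVnn 1 l))]
    congr 1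
    ring
  -- marginal over X
  have hUVY : ∀ (k l : ℤ) (b : ZMod 2), μ (U ⁻¹' {k} ∩ V ⁻¹' {l} ∩ Y ⁻¹' {b})
      = ENNReal.ofReal (1 / 4 * (pU 0 k + pU 1 k) * pV b l) := by
    intro k l b
    rw [show U ⁻¹' {k} ∩ V ⁻¹' {l} ∩ Y ⁻¹' {b}
        = ⋃ a : ZMod 2, (U ⁻¹' {k} ∩ V ⁻¹' {l} ∩ X ⁻¹' {a} ∩ Y ⁻¹' {b}) from by
      ext ω
      simp only [Set.mem_iUnion, Set.mem_inter_iff, Set.mem_preimage, Set.mem_singleton_iff]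
      constructor
      · rintro ⟨⟨h1, h2⟩, h4⟩; exact ⟨X ω, ⟨⟨⟨h1, h2⟩, rfl⟩, h4⟩⟩
      · rintro ⟨a, ⟨⟨⟨h1, h2⟩, h3⟩, h4⟩⟩; exact ⟨⟨h1, h2⟩, h4⟩]
    rw [measure_iUnion
      (pairwise_disjoint_preimage X id (fun x y h => h) _ (fun a ω hω => hω.1.2))
      (fun a => (((mU k).inter (mV l)).inter (mX a)).inter (mY b))]
    rw [tsum_zmod2 (fun a => μ (U ⁻¹' {k} ∩ V ⁻¹' {l} ∩ X ⁻¹' {a} ∩ Y ⁻¹' {b})),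
      hjoint, hjoint,
      ← ENNReal.ofReal_add
        (mul_nonneg (mul_nonneg (by norm_num) (hpUnn 0 k)) (hpVnn b l))
        (mul_nonneg (mul_nonneg (by norm_num) (hpUnn 1 k)) (hpVnn b l))]
    congr 1
    ring
  -- joint of (U, V)
  have hUV : ∀ (k l : ℤ), μ (U ⁻¹' {k} ∩ V ⁻¹' {l})
      = ENNReal.ofReal (1 / 4 * (pU 0 k + pU 1 k) * (pV 0 l + pV 1 l)) := by
    intro k l
    rw [show U ⁻¹' {k} ∩ V ⁻¹' {l}
        = ⋃ a : ZMod 2, (U ⁻¹' {k} ∩ V ⁻¹' {l} ∩ X ⁻¹' {a}) from by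
      ext ω
      simp only [Set.mem_iUnion, Set.mem_inter_iff, Set.mem_preimage, Set.mem_singleton_iff]
      constructor
      · rintro ⟨h1, h2⟩; exact ⟨X ω, ⟨⟨h1, h2⟩, rfl⟩⟩
      · rintro ⟨a, ⟨⟨h1, h2⟩, h3⟩⟩; exact ⟨h1, h2⟩]
    rw [measure_iUnion
      (pairwise_disjoint_preimage X id (fun x y h => h) _ (fun a ω hω => hω.2))
      (fun a => ((mU k).inter (mV l)).inter (mX a))]
    rw [tsum_zmod2 (fun a => μ (U ⁻¹' {k} ∩ V ⁻¹' {l} ∩ X ⁻¹' {a})),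
      hUVX, hUVX,
      ← ENNReal.ofReal_add
        (mul_nonneg (mul_nonneg (by norm_num) (hpUnn 0 k))
          (add_nonneg (hpVnn 0 l) (hpVnn 1 l)))
        (mul_nonneg (mul_nonneg (by norm_num) (hpUnn 1 k))
          (add_nonneg (hpVnn 0 l) (hpVnn 1 l)))]
    congr 1
    ring
  -- marginal (U, X)
  have hUX : ∀ (k : ℤ) (a : ZMod 2), μ (U ⁻¹' {k} ∩ X ⁻¹' {a})
      = ENNReal.ofReal (1 / 2 * pU a k) := by
    intro k a
    rw [show U ⁻¹' {k} ∩ X ⁻¹' {a}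
        = ⋃ l : ℤ, (U ⁻¹' {k} ∩ V ⁻¹' {l} ∩ X ⁻¹' {a}) from by
      ext ω
      simp only [Set.mem_iUnion, Set.mem_inter_iff, Set.mem_preimage, Set.mem_singleton_iff]
      constructor
      · rintro ⟨h1, h3⟩; exact ⟨V ω, ⟨⟨h1, rfl⟩, h3⟩⟩
      · rintro ⟨l, ⟨⟨h1, h2⟩, h3⟩⟩; exact ⟨h1, h3⟩]
    rw [measure_iUnion
      (pairwise_disjoint_preimage V id (fun x y h => h) _ (fun l ω hω => hω.1.2))
      (fun l => ((mU k).inter (mV l)).inter (mX a))]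
    rw [show (fun l => μ (U ⁻¹' {k} ∩ V ⁻¹' {l} ∩ X ⁻¹' {a}))
        = fun l => ENNReal.ofReal (1 / 4 * pU a k * (pV 0 l + pV 1 l)) from
      funext fun l => hUVX k l a]
    rw [← ENNReal.ofReal_tsum_of_nonneg
      (fun l => mul_nonneg (mul_nonneg (by norm_num) (hpUnn a k))
        (add_nonneg (hpVnn 0 l) (hpVnn 1 l)))
      (hSV.mul_left (1 / 4 * pU a k))]
    congr 1
    rw [tsum_mul_left, hsVsum.tsum_eq]
    ring
  -- marginal (V, Y)
  have hVY : ∀ (l : ℤ) (b : ZMod 2), μ (V ⁻¹' {l} ∩ Y ⁻¹' {b})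
      = ENNReal.ofReal (1 / 2 * pV b l) := by
    intro l b
    rw [show V ⁻¹' {l} ∩ Y ⁻¹' {b}
        = ⋃ k : ℤ, (U ⁻¹' {k} ∩ V ⁻¹' {l} ∩ Y ⁻¹' {b}) from by
      ext ω
      simp only [Set.mem_iUnion, Set.mem_inter_iff, Set.mem_preimage, Set.mem_singleton_iff]
      constructor
      · rintro ⟨h2, h4⟩; exact ⟨U ω, ⟨⟨rfl, h2⟩, h4⟩⟩
      · rintro ⟨k, ⟨⟨h1, h2⟩, h4⟩⟩; exact ⟨h2, h4⟩]
    rw [measure_iUnion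
      (pairwise_disjoint_preimage U id (fun x y h => h) _ (fun k ω hω => hω.1.1))
      (fun k => ((mU k).inter (mV l)).inter (mY b))]
    rw [show (fun k => μ (U ⁻¹' {k} ∩ V ⁻¹' {l} ∩ Y ⁻¹' {b}))
        = fun k => ENNReal.ofReal (1 / 4 * (pU 0 k + pU 1 k) * pV b l) from
      funext fun k => hUVY k l b]
    rw [← ENNReal.ofReal_tsum_of_nonneg
      (fun k => mul_nonneg (mul_nonneg (by norm_num)
        (add_nonneg (hpUnn 0 k) (hpUnn 1 k))) (hpVnn b l))
      ((hSU.mul_left (1 / 4)).mul_right (pV b l))]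
    congr 1
    rw [show (fun k => 1 / 4 * (pU 0 k + pU 1 k) * pV b l)
        = fun k => (1 / 4 * pV b l) * (pU 0 k + pU 1 k) from funext fun k => by ring,
      tsum_mul_left, hsUsum.tsum_eq]
    ring
  -- decomposition of (U+V = m) events
  have hWXd : ∀ (m : ℤ) (a : ZMod 2), μ ((fun ω => U ω + V ω) ⁻¹' {m} ∩ X ⁻¹' {a})
      = ENNReal.ofReal (∑' k : ℤ, 1 / 4 * pU a k * (pV 0 (m - k) + pV 1 (m - k))) := by
    intro m a
    rw [show (fun ω => U ω + V ω) ⁻¹' {m} ∩ X ⁻¹' {a}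
        = ⋃ k : ℤ, (U ⁻¹' {k} ∩ V ⁻¹' {m - k} ∩ X ⁻¹' {a}) from by
      ext ω
      simp only [Set.mem_iUnion, Set.mem_inter_iff, Set.mem_preimage, Set.mem_singleton_iff]
      constructor
      · rintro ⟨h1, h2⟩; exact ⟨U ω, ⟨⟨rfl, by omega⟩, h2⟩⟩
      · rintro ⟨k, ⟨⟨h1, h2⟩, h3⟩⟩; exact ⟨by omega, h3⟩]
    rw [measure_iUnion
      (pairwise_disjoint_preimage U id (fun x y h => h) _ (fun k ω hω => hω.1.1))
      (fun k => ((mU k).inter (mV (m - k))).inter (mX a))]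
    rw [show (fun k => μ (U ⁻¹' {k} ∩ V ⁻¹' {m - k} ∩ X ⁻¹' {a}))
        = fun k => ENNReal.ofReal (1 / 4 * pU a k * (pV 0 (m - k) + pV 1 (m - k))) from
      funext fun k => hUVX k (m - k) a]
    rw [← ENNReal.ofReal_tsum_of_nonneg
      (fun k => mul_nonneg (mul_nonneg (by norm_num) (hpUnn a k))
        (add_nonneg (hpVnn 0 (m - k)) (hpVnn 1 (m - k))))
      (summable_conv_inner _ _ ((hSUa a).mul_left (1 / 4)) hSV m)]
  have hWYd : ∀ (m : ℤ) (b : ZMod 2), μ ((fun ω => U ω + V ω) ⁻¹' {m} ∩ Y ⁻¹' {b})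
      = ENNReal.ofReal (∑' k : ℤ, 1 / 4 * (pU 0 k + pU 1 k) * pV b (m - k)) := by
    intro m b
    rw [show (fun ω => U ω + V ω) ⁻¹' {m} ∩ Y ⁻¹' {b}
        = ⋃ k : ℤ, (U ⁻¹' {k} ∩ V ⁻¹' {m - k} ∩ Y ⁻¹' {b}) from by
      ext ω
      simp only [Set.mem_iUnion, Set.mem_inter_iff, Set.mem_preimage, Set.mem_singleton_iff]
      constructor
      · rintro ⟨h1, h2⟩; exact ⟨U ω, ⟨⟨rfl, by omega⟩, h2⟩⟩
      · rintro ⟨k, ⟨⟨h1, h2⟩, h3⟩⟩; exact ⟨by omega, h3⟩]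
    rw [measure_iUnion
      (pairwise_disjoint_preimage U id (fun x y h => h) _ (fun k ω hω => hω.1.1))
      (fun k => ((mU k).inter (mV (m - k))).inter (mY b))]
    rw [show (fun k => μ (U ⁻¹' {k} ∩ V ⁻¹' {m - k} ∩ Y ⁻¹' {b}))
        = fun k => ENNReal.ofReal (1 / 4 * (pU 0 k + pU 1 k) * pV b (m - k)) from
      funext fun k => hUVY k (m - k) b]
    rw [← ENNReal.ofReal_tsum_of_nonneg
      (fun k => mul_nonneg (mul_nonneg (by norm_num)
        (add_nonneg (hpUnn 0 k) (hpUnn 1 k))) (hpVnn b (m - k)))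
      (summable_conv_inner _ _ (hSU.mul_left (1 / 4)) (hSVa b) m)]
  have hWd : ∀ (m : ℤ), μ ((fun ω => U ω + V ω) ⁻¹' {m})
      = ENNReal.ofReal (∑' k : ℤ, 1 / 4 * (pU 0 k + pU 1 k) * (pV 0 (m - k) + pV 1 (m - k))) := by
    intro m
    rw [show (fun ω => U ω + V ω) ⁻¹' {m}
        = ⋃ k : ℤ, (U ⁻¹' {k} ∩ V ⁻¹' {m - k}) from by
      ext ω
      simp only [Set.mem_iUnion, Set.mem_inter_iff, Set.mem_preimage, Set.mem_singleton_iff]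
      constructor
      · rintro h1; exact ⟨U ω, ⟨rfl, by omega⟩⟩
      · rintro ⟨k, ⟨h1, h2⟩⟩; omega]
    rw [measure_iUnion
      (pairwise_disjoint_preimage U id (fun x y h => h) _ (fun k ω hω => hω.1))
      (fun k => (mU k).inter (mV (m - k)))]
    rw [show (fun k => μ (U ⁻¹' {k} ∩ V ⁻¹' {m - k}))
        = fun k => ENNReal.ofReal (1 / 4 * (pU 0 k + pU 1 k) * (pV 0 (m - k) + pV 1 (m - k))) from
      funext fun k => hUV k (m - k)]
    rw [← ENNReal.ofReal_tsum_of_nonneg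
      (fun k => mul_nonneg (mul_nonneg (by norm_num)
        (add_nonneg (hpUnn 0 k) (hpUnn 1 k)))
        (add_nonneg (hpVnn 0 (m - k)) (hpVnn 1 (m - k))))
      (summable_conv_inner _ _ (hSU.mul_left (1 / 4)) hSV m)]
  -- key identities from the characteristic function hypotheses
  have key1 : ∀ (a : ZMod 2) (m : ℤ),
      ∑' k : ℤ, (2 * pU a k) * (pV 0 (m - k) + pV 1 (m - k))
        = ∑' k : ℤ, (pU 0 k + pU 1 k) * (pV 0 (m - k) + pV 1 (m - k)) := by
    intro a m
    refine conv_eq_of_char _ _ _ ((hSUa a).mul_left 2) hSU hSV (fun t => ?_) m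
    rw [charFunZ_two_mul, charFunZ_add _ _ (hSUa 0) (hSUa 1),
      charFunZ_add _ _ (hSVa 0) (hSVa 1)]
    linear_combination (-4 : ℂ) * (hchar a t).1
  have key2 : ∀ (b : ZMod 2) (m : ℤ),
      ∑' k : ℤ, (pU 0 k + pU 1 k) * (2 * pV b (m - k))
        = ∑' k : ℤ, (pU 0 k + pU 1 k) * (pV 0 (m - k) + pV 1 (m - k)) := by
    intro b m
    have h' := conv_eq_of_char (fun l => 2 * pV b l) (fun l => pV 0 l + pV 1 l)
      (fun k => pU 0 k + pU 1 k) ((hSVa b).mul_left 2) hSV hSU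
      (fun t => by
        rw [charFunZ_two_mul, charFunZ_add _ _ (hSVa 0) (hSVa 1),
          charFunZ_add _ _ (hSUa 0) (hSUa 1)]
        linear_combination (-4 : ℂ) * (hchar b t).2) m
    have r1 : ∑' k : ℤ, (pU 0 k + pU 1 k) * (2 * pV b (m - k))
        = ∑' k : ℤ, (2 * pV b k) * (pU 0 (m - k) + pU 1 (m - k)) := by
      rw [← (Equiv.subLeft m).tsum_eq (fun k => (2 * pV b k) * (pU 0 (m - k) + pU 1 (m - k)))]
      apply tsum_congr
      intro k
      show (pU 0 k + pU 1 k) * (2 * pV b (m - k))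
          = (2 * pV b (m - k)) * (pU 0 (m - (m - k)) + pU 1 (m - (m - k)))
      rw [show m - (m - k) = k by ring]
      ring
    have r2 : ∑' k : ℤ, (pU 0 k + pU 1 k) * (pV 0 (m - k) + pV 1 (m - k))
        = ∑' k : ℤ, (pV 0 k + pV 1 k) * (pU 0 (m - k) + pU 1 (m - k)) := by
      rw [← (Equiv.subLeft m).tsum_eq
        (fun k => (pV 0 k + pV 1 k) * (pU 0 (m - k) + pU 1 (m - k)))]
      apply tsum_congr
      intro k
      show (pU 0 k + pU 1 k) * (pV 0 (m - k) + pV 1 (m - k))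
          = (pV 0 (m - k) + pV 1 (m - k)) * (pU 0 (m - (m - k)) + pU 1 (m - (m - k)))
      rw [show m - (m - k) = k by ring]
      ring
    rw [r1, h', ← r2]
  have h12 : (1 / 2 : ENNReal) = ENNReal.ofReal (1 / 2) := by
    rw [ENNReal.ofReal_div_of_pos (by norm_num), ENNReal.ofReal_one, ENNReal.ofReal_ofNat]
  refine ⟨?_, ?_, ?_, ?_⟩
  · -- (S1)
    refine indepFun_of_singletons μ _ _ (hUm.prodMk hX) (hVm.prodMk hY) ?_
    rintro ⟨k, a⟩ ⟨l, b⟩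
    rw [show (fun ω => (U ω, X ω)) ⁻¹' {(k, a)} = U ⁻¹' {k} ∩ X ⁻¹' {a} from by
      ext ω; simp [Prod.ext_iff]]
    rw [show (fun ω => (V ω, Y ω)) ⁻¹' {(l, b)} = V ⁻¹' {l} ∩ Y ⁻¹' {b} from by
      ext ω; simp [Prod.ext_iff]]
    rw [show (U ⁻¹' {k} ∩ X ⁻¹' {a}) ∩ (V ⁻¹' {l} ∩ Y ⁻¹' {b})
        = U ⁻¹' {k} ∩ V ⁻¹' {l} ∩ X ⁻¹' {a} ∩ Y ⁻¹' {b} from by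
      ext ω; simp only [Set.mem_inter_iff]; tauto]
    rw [hjoint, hUX, hVY, ← ENNReal.ofReal_mul (mul_nonneg (by norm_num) (hpUnn a k))]
    congr 1
    ring
  · -- (S2) for X
    refine indepFun_of_singletons μ _ _ (hUm.add hVm) hX ?_
    intro m a
    rw [hWXd m a, hWd m, hXunif a, h12,
      ← ENNReal.ofReal_mul (tsum_nonneg (fun k => mul_nonneg (mul_nonneg (by norm_num)
        (add_nonneg (hpUnn 0 k) (hpUnn 1 k)))
        (add_nonneg (hpVnn 0 (m - k)) (hpVnn 1 (m - k)))))]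
    congr 1
    calc ∑' k : ℤ, 1 / 4 * pU a k * (pV 0 (m - k) + pV 1 (m - k))
        = ∑' k : ℤ, 1 / 8 * ((2 * pU a k) * (pV 0 (m - k) + pV 1 (m - k))) :=
          tsum_congr fun k => by ring
      _ = 1 / 8 * ∑' k : ℤ, (2 * pU a k) * (pV 0 (m - k) + pV 1 (m - k)) := tsum_mul_left
      _ = 1 / 8 * ∑' k : ℤ, (pU 0 k + pU 1 k) * (pV 0 (m - k) + pV 1 (m - k)) := by
          rw [key1 a m]
      _ = ∑' k : ℤ, (1 / 4 * (pU 0 k + pU 1 k) * (pV 0 (m - k) + pV 1 (m - k))) * (1 / 2) := by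
          rw [← tsum_mul_left]
          exact tsum_congr fun k => by ring
      _ = (∑' k : ℤ, 1 / 4 * (pU 0 k + pU 1 k) * (pV 0 (m - k) + pV 1 (m - k))) * (1 / 2) :=
          tsum_mul_right
  · -- (S2) for Y
    refine indepFun_of_singletons μ _ _ (hUm.add hVm) hY ?_
    intro m b
    rw [hWYd m b, hWd m, hYunif b, h12,
      ← ENNReal.ofReal_mul (tsum_nonneg (fun k => mul_nonneg (mul_nonneg (by norm_num)
        (add_nonneg (hpUnn 0 k) (hpUnn 1 k)))
        (add_nonneg (hpVnn 0 (m - k)) (hpVnn 1 (m - k)))))]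
    congr 1
    calc ∑' k : ℤ, 1 / 4 * (pU 0 k + pU 1 k) * pV b (m - k)
        = ∑' k : ℤ, 1 / 8 * ((pU 0 k + pU 1 k) * (2 * pV b (m - k))) :=
          tsum_congr fun k => by ring
      _ = 1 / 8 * ∑' k : ℤ, (pU 0 k + pU 1 k) * (2 * pV b (m - k)) := tsum_mul_left
      _ = 1 / 8 * ∑' k : ℤ, (pU 0 k + pU 1 k) * (pV 0 (m - k) + pV 1 (m - k)) := by
          rw [key2 b m]
      _ = ∑' k : ℤ, (1 / 4 * (pU 0 k + pU 1 k) * (pV 0 (m - k) + pV 1 (m - k))) * (1 / 2) := by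
          rw [← tsum_mul_left]
          exact tsum_congr fun k => by ring
      _ = (∑' k : ℤ, 1 / 4 * (pU 0 k + pU 1 k) * (pV 0 (m - k) + pV 1 (m - k))) * (1 / 2) :=
          tsum_mul_right
  · -- (S3)
    have hparU : ∀ (a : ZMod 2) (k : ℤ), pU a k ≠ 0 → ((k : ZMod 2) = a) := by
      intro a k h
      rcases zmod2_cases a with rfl | rfl
      · rcases zmod2_cases ((k : ZMod 2)) with h0 | h1
        · exact h0
        · exact absurd (hpar0 k (odd_of_cast_one k h1)).1 h
      · rcases zmod2_cases ((k : ZMod 2)) with h0 | h1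
        · exact absurd (hpar1 k (even_of_cast_zero k h0)).1 h
        · exact h1
    have hparV : ∀ (b : ZMod 2) (l : ℤ), pV b l ≠ 0 → ((l : ZMod 2) = b) := by
      intro b l h
      rcases zmod2_cases b with rfl | rfl
      · rcases zmod2_cases ((l : ZMod 2)) with h0 | h1
        · exact h0
        · exact absurd (hpar0 l (odd_of_cast_one l h1)).2 h
      · rcases zmod2_cases ((l : ZMod 2)) with h0 | h1
        · exact absurd (hpar1 l (even_of_cast_zero l h0)).2 h
        · exact h1
    rw [ae_iff]
    refine le_antisymm ?_ zero_le
    have hsub : {ω | ¬ (X ω + Y ω = ((U ω + V ω : ℤ) : ZMod 2))}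
        ⊆ ⋃ q : {q : (ℤ × ℤ) × (ZMod 2 × ZMod 2) //
            ¬ (q.2.1 + q.2.2 = ((q.1.1 + q.1.2 : ℤ) : ZMod 2))},
          (U ⁻¹' {q.1.1.1} ∩ V ⁻¹' {q.1.1.2} ∩ X ⁻¹' {q.1.2.1} ∩ Y ⁻¹' {q.1.2.2}) := by
      intro ω hω
      exact Set.mem_iUnion.2 ⟨⟨((U ω, V ω), (X ω, Y ω)), hω⟩, ⟨⟨⟨rfl, rfl⟩, rfl⟩, rfl⟩⟩
    refine le_trans (measure_mono hsub) (le_trans (measure_iUnion_le _) (le_of_eq ?_))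
    rw [ENNReal.tsum_eq_zero]
    rintro ⟨⟨⟨k, l⟩, ⟨a, b⟩⟩, hq⟩
    simp only at hq
    rw [hjoint]
    have hz : pU a k * pV b l = 0 := by
      by_contra hne
      have h1 : pU a k ≠ 0 := fun h => hne (by rw [h, zero_mul])
      have h2 : pV b l ≠ 0 := fun h => hne (by rw [h, mul_zero])
      apply hq
      rw [← hparU a k h1, ← hparV b l h2]
      push_cast
      ring
    rw [show (1 / 4 : ℝ) * pU a k * pV b l = 0 from by rw [mul_assoc, hz, mul_zero]]
    exact ENNReal.ofReal_zero
end

section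
/- Let X and Y be i.i.d. uniform {0,1}-valued random variables and let U, V be ℤ-valued random variables jointly distributed with X and Y. If U and V are finitely supported (each takes only finitely many values with positive probability), then properties (S1)–(S3) cannot all be satisfied: if (U,X) is independent of (V,Y), U+V is independent of X, and U+V is independent of Y, then U+V is independent of X⊕Y, so X⊕Y cannot be almost surely determined by U+V. -/
open MeasureTheory ProbabilityTheory
open scoped ENNReal

lemma aux_indepFun_of_singletons {Ω α β : Type*} [MeasurableSpace Ω]
    [MeasurableSpace α] [MeasurableSingletonClass α] [Countable α]
    [MeasurableSpace β] [MeasurableSingletonClass β] [Countable β]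
    {μ : Measure Ω} {f : Ω → α} {g : Ω → β} (hf : Measurable f) (hg : Measurable g)
    (h : ∀ a b, μ (f ⁻¹' {a} ∩ g ⁻¹' {b}) = μ (f ⁻¹' {a}) * μ (g ⁻¹' {b})) :
    IndepFun f g μ := by
  rw [indepFun_iff_measure_inter_preimage_eq_mul]
  intro s t _ _
  have h1 : ∀ a : α, μ (f ⁻¹' {a} ∩ g ⁻¹' t) = μ (f ⁻¹' {a}) * μ (g ⁻¹' t) := by
    intro a
    have hset : f ⁻¹' {a} ∩ g ⁻¹' t = ⋃ b ∈ t, (f ⁻¹' {a} ∩ g ⁻¹' {b}) := by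
      ext ω
      simp only [Set.mem_inter_iff, Set.mem_preimage, Set.mem_singleton_iff, Set.mem_iUnion]
      constructor
      · rintro ⟨h1, h2⟩; exact ⟨g ω, h2, h1, rfl⟩
      · rintro ⟨b, hb, h1, h2⟩; exact ⟨h1, h2 ▸ hb⟩
    rw [hset, measure_biUnion t.to_countable ?_ ?_]
    · rw [← tsum_measure_preimage_singleton t.to_countable
        (fun y _ => hg (measurableSet_singleton y)), ← ENNReal.tsum_mul_left]
      exact tsum_congr fun b => h a b
    · intro b1 _ b2 _ hne
      refine Set.disjoint_left.2 fun ω hω1 hω2 => hne ?_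
      have e1 : g ω = b1 := hω1.2
      have e2 : g ω = b2 := hω2.2
      rw [← e1, e2]
    · exact fun b _ => (hf (measurableSet_singleton a)).inter (hg (measurableSet_singleton b))
  have hset : f ⁻¹' s ∩ g ⁻¹' t = ⋃ a ∈ s, (f ⁻¹' {a} ∩ g ⁻¹' t) := by
    ext ω
    simp only [Set.mem_inter_iff, Set.mem_preimage, Set.mem_singleton_iff, Set.mem_iUnion]
    constructor
    · rintro ⟨h1, h2⟩; exact ⟨f ω, h1, rfl, h2⟩
    · rintro ⟨a, ha, h1, h2⟩; exact ⟨h1 ▸ ha, h2⟩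
  rw [hset, measure_biUnion s.to_countable ?_ ?_]
  · rw [← tsum_measure_preimage_singleton s.to_countable
      (fun y _ => hf (measurableSet_singleton y)), ← ENNReal.tsum_mul_right]
    exact tsum_congr fun a => h1 a
  · intro a1 _ a2 _ hne
    refine Set.disjoint_left.2 fun ω hω1 hω2 => hne ?_
    have e1 : f ω = a1 := hω1.1
    have e2 : f ω = a2 := hω2.1
    rw [← e1, e2]
  · exact fun a _ => (hf (measurableSet_singleton a)).inter (hg t.to_countable.measurableSet)

lemma aux_measure_add_fiber {Ω : Type*} [MeasurableSpace Ω] (μ : Measure Ω)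
    {U V : Ω → ℤ} (hU : Measurable U) (hV : Measurable V) {A : Set Ω} (hA : MeasurableSet A)
    (w : ℤ) :
    μ ((fun ω => U ω + V ω) ⁻¹' {w} ∩ A) = ∑' u : ℤ, μ (U ⁻¹' {u} ∩ V ⁻¹' {w - u} ∩ A) := by
  have hset : (fun ω => U ω + V ω) ⁻¹' {w} ∩ A
      = ⋃ u : ℤ, (U ⁻¹' {u} ∩ V ⁻¹' {w - u} ∩ A) := by
    ext ω
    simp only [Set.mem_inter_iff, Set.mem_preimage, Set.mem_singleton_iff, Set.mem_iUnion]
    constructor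
    · rintro ⟨h1, h2⟩; exact ⟨U ω, ⟨rfl, by omega⟩, h2⟩
    · rintro ⟨u, ⟨h1, h2⟩, h3⟩; exact ⟨by omega, h3⟩
  rw [hset, measure_iUnion ?_ ?_]
  · intro u1 u2 hne
    refine Set.disjoint_left.2 fun ω hω1 hω2 => hne ?_
    rw [← hω1.1.1, hω2.1.1]
  · exact fun u => ((hU (measurableSet_singleton u)).inter
      (hV (measurableSet_singleton _))).inter hA

lemma aux_split2 {Ω : Type*} [MeasurableSpace Ω] (μ : Measure Ω)
    {X : Ω → ZMod 2} (hX : Measurable X) {A : Set Ω} (hA : MeasurableSet A) (z : ZMod 2) :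
    μ A = μ (A ∩ X ⁻¹' {z}) + μ (A ∩ X ⁻¹' {z + 1}) := by
  have hcov : ∀ z c : ZMod 2, c = z ∨ c = z + 1 := by decide
  have hne : ∀ z c : ZMod 2, ¬ (c = z ∧ c = z + 1) := by decide
  have hset : A = (A ∩ X ⁻¹' {z}) ∪ (A ∩ X ⁻¹' {z + 1}) := by
    ext ω
    simp only [Set.mem_union, Set.mem_inter_iff, Set.mem_preimage, Set.mem_singleton_iff]
    constructor
    · intro h; rcases hcov z (X ω) with h' | h'
      · exact Or.inl ⟨h, h'⟩
      · exact Or.inr ⟨h, h'⟩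
    · rintro (⟨h, _⟩ | ⟨h, _⟩) <;> exact h
  have hdisj : Disjoint (A ∩ X ⁻¹' {z}) (A ∩ X ⁻¹' {z + 1}) :=
    Set.disjoint_left.2 fun ω hω1 hω2 => hne z (X ω) ⟨hω1.2, hω2.2⟩
  calc μ A = μ ((A ∩ X ⁻¹' {z}) ∪ (A ∩ X ⁻¹' {z + 1})) := by rw [← hset]
    _ = _ := measure_union hdisj (hA.inter (hX (measurableSet_singleton _)))

lemma aux_factor {Ω : Type*} [MeasurableSpace Ω] {μ : Measure Ω}
    {U V : Ω → ℤ} {X Y : Ω → ZMod 2}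
    (hS1 : IndepFun (fun ω => (U ω, X ω)) (fun ω => (V ω, Y ω)) μ)
    (u v : ℤ) (sx sy : Set (ZMod 2)) :
    μ (U ⁻¹' {u} ∩ V ⁻¹' {v} ∩ (X ⁻¹' sx ∩ Y ⁻¹' sy))
      = μ (U ⁻¹' {u} ∩ X ⁻¹' sx) * μ (V ⁻¹' {v} ∩ Y ⁻¹' sy) := by
  have h := hS1.measure_inter_preimage_eq_mul ({u} ×ˢ sx) ({v} ×ˢ sy)
    ((measurableSet_singleton u).prod sx.to_countable.measurableSet)
    ((measurableSet_singleton v).prod sy.to_countable.measurableSet)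
  rw [Set.mk_preimage_prod, Set.mk_preimage_prod] at h
  rw [← h]
  congr 1
  ext ω
  simp only [Set.mem_inter_iff, Set.mem_preimage, Set.mem_singleton_iff]
  tauto

/-- Let `X, Y` be i.i.d. uniform `{0,1}`-valued random variables and `U, V`
integer-valued random variables jointly distributed with them.  If `U` and `V` are finitely
supported, then (S1)–(S3) cannot all hold: if `(U,X) ⫫ (V,Y)`, `U+V ⫫ X` and `U+V ⫫ Y`, then
`U+V ⫫ X⊕Y`, so `X⊕Y` cannot be almost surely determined by `U+V`. -/
theorem no_finitely_supported_secure_xor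
    {Ω : Type*} [MeasurableSpace Ω] (μ : Measure Ω) [IsProbabilityMeasure μ]
    (X Y : Ω → ZMod 2) (U V : Ω → ℤ)
    (hX : Measurable X) (hY : Measurable Y) (hUm : Measurable U) (hVm : Measurable V)
    -- X and Y are i.i.d. uniform on {0,1}
    (hXY : IndepFun X Y μ)
    (hXunif : ∀ a : ZMod 2, μ (X ⁻¹' {a}) = 1 / 2)
    (hYunif : ∀ a : ZMod 2, μ (Y ⁻¹' {a}) = 1 / 2)
    -- U and V are finitely supported
    (hUfin : {k : ℤ | μ (U ⁻¹' {k}) ≠ 0}.Finite)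
    (hVfin : {k : ℤ | μ (V ⁻¹' {k}) ≠ 0}.Finite)
    -- (S1)
    (hS1 : IndepFun (fun ω => (U ω, X ω)) (fun ω => (V ω, Y ω)) μ)
    -- (S2)
    (hS2X : IndepFun (fun ω => U ω + V ω) X μ)
    (hS2Y : IndepFun (fun ω => U ω + V ω) Y μ) :
    IndepFun (fun ω => U ω + V ω) (fun ω => X ω + Y ω) μ ∧
      ¬ ∃ g : ℤ → ZMod 2, ∀ᵐ ω ∂μ, X ω + Y ω = g (U ω + V ω) := by
  classical
  -- abbreviations
  set P : ℤ → ZMod 2 → ℝ≥0∞ := fun u x => μ (U ⁻¹' {u} ∩ X ⁻¹' {x}) with hP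
  set Q : ℤ → ZMod 2 → ℝ≥0∞ := fun v y => μ (V ⁻¹' {v} ∩ Y ⁻¹' {y}) with hQ
  set M : ℤ → ℝ≥0∞ := fun u => μ (U ⁻¹' {u}) with hM
  set N : ℤ → ℝ≥0∞ := fun v => μ (V ⁻¹' {v}) with hN
  -- factorizations from (S1)
  have hfac := aux_factor hS1
  have hfacX : ∀ u v : ℤ, ∀ x : ZMod 2,
      μ (U ⁻¹' {u} ∩ V ⁻¹' {v} ∩ X ⁻¹' {x}) = P u x * N v := by
    intro u v x
    have := hfac u v {x} Set.univ
    simpa using this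
  have hfacM : ∀ u v : ℤ, μ (U ⁻¹' {u} ∩ V ⁻¹' {v}) = M u * N v := by
    intro u v
    have := hfac u v Set.univ Set.univ
    simpa using this
  have hfacXY : ∀ u v : ℤ, ∀ x y : ZMod 2,
      μ (U ⁻¹' {u} ∩ V ⁻¹' {v} ∩ (X ⁻¹' {x} ∩ Y ⁻¹' {y})) = P u x * Q v y :=
    fun u v x y => hfac u v {x} {y}
  -- fiber decomposition of W = U + V
  have hWA : ∀ (A : Set Ω), MeasurableSet A → ∀ w : ℤ,
      μ ((fun ω => U ω + V ω) ⁻¹' {w} ∩ A)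
        = ∑' u : ℤ, μ (U ⁻¹' {u} ∩ V ⁻¹' {w - u} ∩ A) :=
    fun A hA w => aux_measure_add_fiber μ hUm hVm hA w
  have hWtot : ∀ w : ℤ, μ ((fun ω => U ω + V ω) ⁻¹' {w}) = ∑' u : ℤ, M u * N (w - u) := by
    intro w
    have := hWA Set.univ MeasurableSet.univ w
    simp only [Set.inter_univ] at this
    rw [this]
    exact tsum_congr fun u => hfacM u (w - u)
  -- (S2X)/(S2Y) consequences: the two sums agree
  have hEx : ∀ w : ℤ, ∀ x : ZMod 2,
      (∑' u : ℤ, P u x * N (w - u)) = μ ((fun ω => U ω + V ω) ⁻¹' {w}) * (1 / 2) := by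
    intro w x
    have h1 := hWA (X ⁻¹' {x}) (hX (measurableSet_singleton x)) w
    have h2 := hS2X.measure_inter_preimage_eq_mul {w} {x}
      (measurableSet_singleton w) (measurableSet_singleton x)
    rw [hXunif x] at h2
    rw [← h2, h1]
    exact (tsum_congr fun u => hfacX u (w - u) x).symm
  have hEq : ∀ w : ℤ, (∑' u : ℤ, P u 0 * N (w - u)) = ∑' u : ℤ, P u 1 * N (w - u) := by
    intro w
    rw [hEx w 0, hEx w 1]
  -- convert to finite sums over the support of U
  have hPzero : ∀ u : ℤ, μ (U ⁻¹' {u}) = 0 → ∀ x : ZMod 2, P u x = 0 := by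
    intro u hu x
    exact le_antisymm (hu ▸ measure_mono Set.inter_subset_left) zero_le
  have hvan : ∀ x : ZMod 2, ∀ w : ℤ, ∀ u ∉ hUfin.toFinset, P u x * N (w - u) = 0 := by
    intro x w u hu
    have hu' : μ (U ⁻¹' {u}) = 0 := by
      by_contra h
      exact hu (hUfin.mem_toFinset.2 h)
    rw [hPzero u hu' x, zero_mul]
  have hEqF : ∀ w : ℤ,
      (∑ u ∈ hUfin.toFinset, P u 0 * N (w - u)) = ∑ u ∈ hUfin.toFinset, P u 1 * N (w - u) := by
    intro w
    rw [← tsum_eq_sum (L := SummationFilter.unconditional ℤ) (hvan 0 w),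
      ← tsum_eq_sum (L := SummationFilter.unconditional ℤ) (hvan 1 w)]
    exact hEq w
  -- support of N is nonempty
  have hNex : ∃ v : ℤ, μ (V ⁻¹' {v}) ≠ 0 := by
    by_contra hall
    push_neg at hall
    have hset : (Set.univ : Set Ω) = ⋃ v : ℤ, V ⁻¹' {v} := by ext ω; simp
    have h1 : μ Set.univ ≤ ∑' v : ℤ, μ (V ⁻¹' {v}) := hset ▸ measure_iUnion_le _
    simp [hall, measure_univ] at h1
  -- KEY CLAIM: P u 0 = P u 1 for all u
  have hPP : ∀ u : ℤ, P u 0 = P u 1 := by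
    by_contra hcon
    push_neg at hcon
    obtain ⟨u', hu'⟩ := hcon
    set T : Finset ℤ := hUfin.toFinset.filter (fun u => P u 0 ≠ P u 1) with hT
    have hTne : T.Nonempty := by
      refine ⟨u', Finset.mem_filter.2 ⟨hUfin.mem_toFinset.2 ?_, hu'⟩⟩
      intro h0
      exact hu' (by rw [hPzero u' h0 0, hPzero u' h0 1])
    have hNne : (hVfin.toFinset).Nonempty := by
      obtain ⟨v, hv⟩ := hNex
      exact ⟨v, hVfin.mem_toFinset.2 hv⟩
    set u0 : ℤ := T.max' hTne with hu0
    set v0 : ℤ := hVfin.toFinset.max' hNne with hv0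
    set w : ℤ := u0 + v0 with hw
    have hu0T : u0 ∈ T := T.max'_mem hTne
    have hu0sU : u0 ∈ hUfin.toFinset := (Finset.mem_filter.1 hu0T).1
    have hwu0 : w - u0 = v0 := by omega
    have hrest : ∀ u ∈ hUfin.toFinset.erase u0, P u 0 * N (w - u) = P u 1 * N (w - u) := by
      intro u hu
      have hne := Finset.ne_of_mem_erase hu
      have husU := Finset.mem_of_mem_erase hu
      by_cases hT' : u ∈ T
      · have hlt : u < u0 := lt_of_le_of_ne (Finset.le_max' T u hT') hne
        have hnm : w - u ∉ hVfin.toFinset := by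
          intro hmem
          have := Finset.le_max' _ _ hmem
          omega
        have hN0 : N (w - u) = 0 := by
          by_contra h
          exact hnm (hVfin.mem_toFinset.2 h)
        rw [hN0, mul_zero, mul_zero]
      · have : P u 0 = P u 1 := by
          by_contra h
          exact hT' (Finset.mem_filter.2 ⟨husU, h⟩)
        rw [this]
    have hsum := hEqF w
    rw [← Finset.add_sum_erase _ _ hu0sU, ← Finset.add_sum_erase _ _ hu0sU] at hsum
    rw [Finset.sum_congr rfl hrest] at hsum
    have hKtop : (∑ u ∈ hUfin.toFinset.erase u0, P u 1 * N (w - u)) ≠ ∞ :=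
      (ENNReal.sum_lt_top.2 fun a _ =>
        ENNReal.mul_lt_top (measure_lt_top μ _) (measure_lt_top μ _)).ne
    have hcancel : P u0 0 * N (w - u0) = P u0 1 * N (w - u0) :=
      WithTop.add_right_cancel hKtop hsum
    rw [hwu0] at hcancel
    have hNv0 : N v0 ≠ 0 := hVfin.mem_toFinset.1 (hVfin.toFinset.max'_mem hNne)
    have hNv0' : N v0 ≠ ∞ := measure_ne_top μ _
    have : P u0 0 = P u0 1 := by
      have h2 := congrArg (· * (N v0)⁻¹) hcancel
      simpa [mul_assoc, ENNReal.mul_inv_cancel hNv0 hNv0'] using h2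
    exact (Finset.mem_filter.1 hu0T).2 this
  -- consequences: M u = 2 * P u 0 and N v = Q v s + Q v (s+1)
  have hMsplit : ∀ u : ℤ, M u = 2 * P u 0 := by
    intro u
    have h := aux_split2 μ hX (hUm (measurableSet_singleton u)) 0
    rw [zero_add] at h
    calc M u = P u 0 + P u 1 := h
      _ = 2 * P u 0 := by rw [← hPP u, two_mul]
  have hNsplit : ∀ v : ℤ, ∀ s : ZMod 2, N v = Q v s + Q v (s + 1) :=
    fun v s => aux_split2 μ hY (hVm (measurableSet_singleton v)) s
  -- distribution of S = X + Y
  have hScov : ∀ s a b : ZMod 2, a + b = s ↔ (a = 0 ∧ b = s) ∨ (a = 1 ∧ b = s + 1) := by decide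
  have hSset : ∀ s : ZMod 2, (fun ω => X ω + Y ω) ⁻¹' {s}
      = (X ⁻¹' {0} ∩ Y ⁻¹' {s}) ∪ (X ⁻¹' {1} ∩ Y ⁻¹' {s + 1}) := by
    intro s
    ext ω
    simp only [Set.mem_preimage, Set.mem_singleton_iff, Set.mem_union, Set.mem_inter_iff]
    exact hScov s (X ω) (Y ω)
  have hSdisj : ∀ s : ZMod 2,
      Disjoint (X ⁻¹' {(0 : ZMod 2)} ∩ Y ⁻¹' {s}) (X ⁻¹' {1} ∩ Y ⁻¹' {s + 1}) := by
    intro s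
    refine Set.disjoint_left.2 fun ω hω1 hω2 => ?_
    have h0 : X ω = 0 := hω1.1
    have h1 : X ω = 1 := hω2.1
    rw [h0] at h1
    exact absurd h1 (by decide)
  have hSmeas : ∀ s : ZMod 2, μ ((fun ω => X ω + Y ω) ⁻¹' {s}) = 1 / 2 := by
    intro s
    rw [hSset s, measure_union (hSdisj s)
      ((hX (measurableSet_singleton _)).inter (hY (measurableSet_singleton _)))]
    rw [hXY.measure_inter_preimage_eq_mul {0} {s} (measurableSet_singleton _)
        (measurableSet_singleton _),
      hXY.measure_inter_preimage_eq_mul {1} {s + 1} (measurableSet_singleton _)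
        (measurableSet_singleton _),
      hXunif, hXunif, hYunif, hYunif]
    rw [one_div, ← two_mul, ← mul_assoc,
      ENNReal.mul_inv_cancel two_ne_zero ENNReal.ofNat_ne_top, one_mul]
  -- the key singleton independence identity
  have hkey : ∀ (w : ℤ) (s : ZMod 2),
      μ ((fun ω => U ω + V ω) ⁻¹' {w} ∩ (fun ω => X ω + Y ω) ⁻¹' {s})
        = μ ((fun ω => U ω + V ω) ⁻¹' {w}) * μ ((fun ω => X ω + Y ω) ⁻¹' {s}) := by
    intro w s
    -- LHS
    have hA0 : MeasurableSet (X ⁻¹' {(0 : ZMod 2)} ∩ Y ⁻¹' {s}) :=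
      (hX (measurableSet_singleton _)).inter (hY (measurableSet_singleton _))
    have hA1 : MeasurableSet (X ⁻¹' {(1 : ZMod 2)} ∩ Y ⁻¹' {s + 1}) :=
      (hX (measurableSet_singleton _)).inter (hY (measurableSet_singleton _))
    have hLHS : μ ((fun ω => U ω + V ω) ⁻¹' {w} ∩ (fun ω => X ω + Y ω) ⁻¹' {s})
        = ∑' u : ℤ, P u 0 * N (w - u) := by
      have hsplit : (fun ω => U ω + V ω) ⁻¹' {w} ∩ (fun ω => X ω + Y ω) ⁻¹' {s}
          = ((fun ω => U ω + V ω) ⁻¹' {w} ∩ (X ⁻¹' {0} ∩ Y ⁻¹' {s}))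
            ∪ ((fun ω => U ω + V ω) ⁻¹' {w} ∩ (X ⁻¹' {1} ∩ Y ⁻¹' {s + 1})) := by
        rw [hSset s, Set.inter_union_distrib_left]
      have hdisj2 : Disjoint
          ((fun ω => U ω + V ω) ⁻¹' {w} ∩ (X ⁻¹' {(0 : ZMod 2)} ∩ Y ⁻¹' {s}))
          ((fun ω => U ω + V ω) ⁻¹' {w} ∩ (X ⁻¹' {1} ∩ Y ⁻¹' {s + 1})) :=
        ((hSdisj s).mono Set.inter_subset_right Set.inter_subset_right)
      rw [hsplit, measure_union hdisj2 ((hUm.add hVm (measurableSet_singleton w)).inter hA1)]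
      rw [hWA _ hA0 w, hWA _ hA1 w]
      rw [← ENNReal.tsum_add]
      refine tsum_congr fun u => ?_
      rw [hfacXY u (w - u) 0 s, hfacXY u (w - u) 1 (s + 1), ← hPP u, ← mul_add,
        ← hNsplit (w - u) s]
    rw [hLHS, hSmeas s, hWtot w]
    have : (∑' u : ℤ, M u * N (w - u)) = 2 * ∑' u : ℤ, P u 0 * N (w - u) := by
      rw [← ENNReal.tsum_mul_left]
      exact tsum_congr fun u => by rw [hMsplit u, mul_assoc]
    rw [this, one_div, mul_comm (2 : ℝ≥0∞), mul_assoc,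
      ENNReal.mul_inv_cancel two_ne_zero ENNReal.ofNat_ne_top, mul_one]
  have hIndep : IndepFun (fun ω => U ω + V ω) (fun ω => X ω + Y ω) μ :=
    aux_indepFun_of_singletons (hUm.add hVm) (hX.add hY) hkey
  refine ⟨hIndep, ?_⟩
  rintro ⟨g, hg⟩
  have hgm : Measurable g := measurable_from_top
  have h1 : IndepFun (g ∘ fun ω => U ω + V ω) (fun ω => X ω + Y ω) μ :=
    hIndep.comp hgm measurable_id
  have h2 : IndepFun (fun ω => X ω + Y ω) (fun ω => X ω + Y ω) μ :=
    h1.congr (hg.mono fun ω h => h.symm) (Filter.EventuallyEq.refl _ _)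
  have h3 := h2.measure_inter_preimage_eq_mul {(0 : ZMod 2)} {(0 : ZMod 2)}
    (measurableSet_singleton _) (measurableSet_singleton _)
  rw [Set.inter_self, hSmeas 0] at h3
  have : ((1 : ℝ≥0∞) / 2).toReal = ((1 : ℝ≥0∞) / 2 * (1 / 2)).toReal := by rw [← h3]
  rw [ENNReal.toReal_mul] at this
  norm_num at this
end

section
/- Let f: ℝ → ℝ be defined by f(0) = 1/(2π) and f(x) = (1 − cos x)/(π x²) for x ≠ 0. Then ∫_{-∞}^{∞} f(y)² dy = 1/(3π). -/
open Real

open MeasureTheory Set Filter Topology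

namespace FejerAux


noncomputable def gg (x : ℝ) : ℝ := (1 - Real.cos x) ^ 2 / x ^ 4

noncomputable def hh (t : ℝ) : ℝ := t ^ 2 / ((t ^ 2 + 1) * (t ^ 2 + 4))

lemma L2int {b : ℝ} (hb : 0 < b) (a : ℝ) :
    IntegrableOn (fun x : ℝ => Real.exp (-(b * x)) * Real.cos (a * x)) (Ioi 0) := by
  apply (exp_neg_integrableOn_Ioi 0 hb).mono' ?_ ?_
  · exact (Continuous.aestronglyMeasurable (by fun_prop))
  · filter_upwards with x
    rw [norm_mul, Real.norm_eq_abs, Real.norm_eq_abs, abs_of_pos (Real.exp_pos _)]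
    rw [neg_mul]
    nlinarith [Real.abs_cos_le_one (a*x), Real.exp_pos (-(b*x)), abs_nonneg (Real.cos (a*x))]

lemma L2 {b : ℝ} (hb : 0 < b) (a : ℝ) :
    ∫ x in Ioi (0:ℝ), Real.exp (-(b * x)) * Real.cos (a * x) = b / (b ^ 2 + a ^ 2) := by
  have hD : 0 < b ^ 2 + a ^ 2 := by positivity
  have key := integral_Ioi_of_hasDerivAt_of_tendsto' (a := 0) (m := 0)
    (f := fun x => Real.exp (-(b * x)) * (a * Real.sin (a * x) - b * Real.cos (a * x)) / (b ^ 2 + a ^ 2))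
    (f' := fun x => Real.exp (-(b * x)) * Real.cos (a * x)) ?_ (L2int hb a) ?_
  · rw [key]; simp; rw [neg_div]; ring
  · intro x _
    have he : HasDerivAt (fun x : ℝ => Real.exp (-(b * x))) (Real.exp (-(b*x)) * (-b)) x :=
      (Real.hasDerivAt_exp _).comp x (((hasDerivAt_id x).const_mul b).neg.congr_deriv (by simp) : HasDerivAt (fun y => -(b * y)) (-b) x)
    have hs : HasDerivAt (fun x : ℝ => Real.sin (a * x)) (Real.cos (a*x) * a) x :=
      (Real.hasDerivAt_sin _).comp x (by simpa using (hasDerivAt_id x).const_mul a)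
    have hc : HasDerivAt (fun x : ℝ => Real.cos (a * x)) (-Real.sin (a*x) * a) x :=
      (Real.hasDerivAt_cos _).comp x (by simpa using (hasDerivAt_id x).const_mul a)
    have H := (he.mul ((hs.const_mul a).sub (hc.const_mul b))).div_const (b ^ 2 + a ^ 2)
    refine H.congr_deriv (Eq.symm ?_)
    simp only [Pi.sub_apply, Pi.mul_apply]
    field_simp
    ring
  · have h1 : Tendsto (fun x : ℝ => Real.exp (-(b * x))) atTop (nhds 0) := by
      apply Real.tendsto_exp_atBot.comp
      apply tendsto_neg_atBot_iff.mpr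
      exact Tendsto.const_mul_atTop hb (fun _ h => h)
    have h2 : ∀ x : ℝ, ‖Real.exp (-(b * x)) * (a * Real.sin (a * x) - b * Real.cos (a * x)) / (b ^ 2 + a ^ 2)‖
        ≤ Real.exp (-(b * x)) * ((|a| + |b|) / (b ^ 2 + a ^ 2)) := by
      intro x
      rw [norm_div, norm_mul, Real.norm_eq_abs, Real.norm_eq_abs, Real.norm_eq_abs,
        abs_of_pos (Real.exp_pos _), abs_of_pos hD, div_le_iff₀ hD]
      have : |a * Real.sin (a * x) - b * Real.cos (a * x)| ≤ |a| + |b| := by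
        calc |a * Real.sin (a * x) - b * Real.cos (a * x)|
            ≤ |a * Real.sin (a * x)| + |b * Real.cos (a * x)| := abs_sub _ _
          _ ≤ |a| + |b| := by
              rw [abs_mul, abs_mul]
              nlinarith [abs_nonneg a, abs_nonneg b, Real.abs_sin_le_one (a*x),
                Real.abs_cos_le_one (a*x), abs_nonneg (Real.sin (a*x)), abs_nonneg (Real.cos (a*x))]
      have h3 := Real.exp_pos (-(b*x))
      calc Real.exp (-(b * x)) * |a * Real.sin (a * x) - b * Real.cos (a * x)|
          ≤ Real.exp (-(b * x)) * (|a| + |b|) := by nlinarith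
        _ = Real.exp (-(b * x)) * ((|a| + |b|) / (b ^ 2 + a ^ 2)) * (b ^ 2 + a ^ 2) := by field_simp
    apply squeeze_zero_norm h2
    simpa using h1.mul_const ((|a| + |b|) / (b ^ 2 + a ^ 2))

lemma L4deriv {c : ℝ} (hc : 0 < c) (x : ℝ) :
    HasDerivAt (fun t : ℝ => (1/c) * Real.arctan (t / c)) (1 / (x ^ 2 + c ^ 2)) x := by
  have h1 : HasDerivAt (fun t : ℝ => t / c) (1/c) x :=
    (hasDerivAt_id x).div_const c |>.congr_deriv (by ring)
  have h3 := ((Real.hasDerivAt_arctan (x / c)).comp x h1).const_mul (1/c)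
  refine h3.congr_deriv (Eq.symm ?_)
  have : 1 + (x/c)^2 = (x^2 + c^2)/c^2 := by field_simp; ring
  rw [this]
  field_simp

lemma L4tendsto {c : ℝ} (hc : 0 < c) :
    Tendsto (fun t : ℝ => (1/c) * Real.arctan (t / c)) atTop (nhds ((1/c) * (π/2))) := by
  apply Tendsto.const_mul
  exact (Real.tendsto_arctan_atTop.mono_right nhdsWithin_le_nhds).comp
    (tendsto_id.atTop_div_const hc)

lemma L4 {c : ℝ} (hc : 0 < c) :
    ∫ t in Ioi (0:ℝ), 1 / (t ^ 2 + c ^ 2) = π / (2 * c) := by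
  have := integral_Ioi_of_hasDerivAt_of_nonneg' (a := 0)
    (fun x _ => L4deriv hc x) (fun x _ => by positivity) (L4tendsto hc)
  rw [this]; simp; ring

lemma L4i {c : ℝ} (hc : 0 < c) :
    IntegrableOn (fun t : ℝ => 1 / (t ^ 2 + c ^ 2)) (Ioi 0) :=
  integrableOn_Ioi_deriv_of_nonneg' (fun x _ => L4deriv hc x) (fun x _ => by positivity)
    (L4tendsto hc)

lemma L3 {x : ℝ} (hx : 0 < x) :
    ∫ t in Ioi (0:ℝ), t ^ 3 * Real.exp (-(x * t)) = 6 / x ^ 4 := by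
  have h := integral_rpow_mul_exp_neg_mul_Ioi (a := 4) (r := x) (by norm_num) hx
  have e1 : ∀ t : ℝ, t ^ ((4:ℝ) - 1) = t ^ (3:ℕ) := by
    intro t; rw [show (4:ℝ) - 1 = ((3:ℕ):ℝ) by norm_num, Real.rpow_natCast]
  simp_rw [e1] at h
  rw [h]
  have h2 : Real.Gamma 4 = 6 := by
    rw [show (4:ℝ) = ((3:ℕ):ℝ) + 1 by norm_num, Real.Gamma_nat_eq_factorial]
    norm_num [Nat.factorial]
  rw [h2, show (1/x) ^ (4:ℝ) = (1/x) ^ (4:ℕ) by rw [← Real.rpow_natCast]; norm_num]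
  field_simp

lemma L3i {x : ℝ} (hx : 0 < x) :
    IntegrableOn (fun t : ℝ => t ^ 3 * Real.exp (-(x * t))) (Ioi 0) := by
  have h := integrableOn_rpow_mul_exp_neg_mul_rpow (p := 1) (s := 3) (b := x)
    (by norm_num) (by norm_num) hx
  apply h.congr_fun ?_ measurableSet_Ioi
  intro t ht
  norm_num [Real.rpow_natCast, show t ^ (3:ℝ) = t ^ (3:ℕ) by rw [← Real.rpow_natCast]; norm_num]

lemma LB {t : ℝ} (ht : 0 < t) :
    ∫ x in Ioi (0:ℝ), (1 - Real.cos x) ^ 2 * (t ^ 3 / 6 * Real.exp (-(x * t))) = hh t := by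
  have i0 := (L2int ht 0).const_mul (3/2 : ℝ)
  have i1 := (L2int ht 1).const_mul (2 : ℝ)
  have i2 := (L2int ht 2).const_mul (1/2 : ℝ)
  have step1 : ∫ x in Ioi (0:ℝ), (1 - Real.cos x) ^ 2 * (t ^ 3 / 6 * Real.exp (-(x * t)))
      = ∫ x in Ioi (0:ℝ), t ^ 3 / 6 *
        ((3/2) * (Real.exp (-(t * x)) * Real.cos (0 * x))
          - (2) * (Real.exp (-(t * x)) * Real.cos (1 * x))
          + (1/2) * (Real.exp (-(t * x)) * Real.cos (2 * x))) := by
    refine setIntegral_congr_fun measurableSet_Ioi (fun x _ => ?_)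
    have hc := Real.cos_sq x
    have : Real.exp (-(x * t)) = Real.exp (-(t * x)) := by ring_nf
    rw [this]
    simp only [zero_mul, one_mul, Real.cos_zero]
    linear_combination (t ^ 3 / 6 * Real.exp (-(t * x))) * hc
  have i01 : Integrable (fun x : ℝ => 3/2 * (Real.exp (-(t * x)) * Real.cos (0 * x))
      - 2 * (Real.exp (-(t * x)) * Real.cos (1 * x))) (volume.restrict (Ioi 0)) := i0.sub i1
  rw [step1, MeasureTheory.integral_const_mul, integral_add i01 i2, integral_sub i0 i1,
    MeasureTheory.integral_const_mul, MeasureTheory.integral_const_mul,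
    MeasureTheory.integral_const_mul, L2 ht 0, L2 ht 1, L2 ht 2]
  have h0 : t ^ 2 + 0 ^ 2 ≠ 0 := by positivity
  have h1 : t ^ 2 + 1 ^ 2 ≠ 0 := by positivity
  have h2 : t ^ 2 + 2 ^ 2 ≠ 0 := by positivity
  have h1' : t ^ 2 + 1 ≠ 0 := by positivity
  have h4' : t ^ 2 + 4 ≠ 0 := by positivity
  unfold hh
  field_simp
  ring

lemma LBi {t : ℝ} (ht : 0 < t) :
    IntegrableOn (fun x : ℝ => (1 - Real.cos x) ^ 2 * (t ^ 3 / 6 * Real.exp (-(x * t)))) (Ioi 0) := by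
  apply ((exp_neg_integrableOn_Ioi 0 ht).const_mul (4 * (t ^ 3 / 6))).mono'
    (Continuous.aestronglyMeasurable (by fun_prop))
  filter_upwards with x
  rw [Real.norm_eq_abs, abs_of_nonneg (by positivity), neg_mul]
  have h1 : (1 - Real.cos x) ^ 2 ≤ 4 := by nlinarith [Real.neg_one_le_cos x, Real.cos_le_one x]
  have h2 : Real.exp (-(x * t)) = Real.exp (-(t * x)) := by ring_nf
  rw [h2]
  calc (1 - Real.cos x) ^ 2 * (t ^ 3 / 6 * Real.exp (-(t * x)))
      ≤ 4 * (t ^ 3 / 6 * Real.exp (-(t * x))) :=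
        mul_le_mul_of_nonneg_right h1 (by positivity)
    _ = 4 * (t ^ 3 / 6) * Real.exp (-(t * x)) := by ring

lemma Lh : ∫ t in Ioi (0:ℝ), hh t = π / 6 := by
  have i4 := (L4i (show (0:ℝ) < 2 by norm_num)).const_mul (4/3 : ℝ)
  have i1 := (L4i (show (0:ℝ) < 1 by norm_num)).const_mul (1/3 : ℝ)
  have step : ∫ t in Ioi (0:ℝ), hh t
      = ∫ t in Ioi (0:ℝ), (4/3) * (1 / (t ^ 2 + 2 ^ 2)) - (1/3) * (1 / (t ^ 2 + 1 ^ 2)) := by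
    refine setIntegral_congr_fun measurableSet_Ioi (fun t _ => ?_)
    have h1 : t ^ 2 + 1 ≠ 0 := by positivity
    have h4 : t ^ 2 + 4 ≠ 0 := by positivity
    unfold hh
    field_simp
    ring
  rw [step, integral_sub i4 i1, MeasureTheory.integral_const_mul,
    MeasureTheory.integral_const_mul, L4 (show (0:ℝ) < 2 by norm_num),
    L4 (show (0:ℝ) < 1 by norm_num)]
  ring

lemma Lhi : IntegrableOn hh (Ioi (0:ℝ)) := by
  have i4 := (L4i (show (0:ℝ) < 2 by norm_num)).const_mul (4/3 : ℝ)
  have i1 := (L4i (show (0:ℝ) < 1 by norm_num)).const_mul (1/3 : ℝ)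
  have i41 : IntegrableOn (fun t : ℝ => 4/3 * (1 / (t ^ 2 + 2 ^ 2)) - 1/3 * (1 / (t ^ 2 + 1 ^ 2)))
      (Ioi 0) := i4.sub i1
  apply i41.congr_fun ?_ measurableSet_Ioi
  intro t _
  have h1 : t ^ 2 + 1 ≠ 0 := by positivity
  have h4 : t ^ 2 + 4 ≠ 0 := by positivity
  simp only [hh]
  field_simp
  ring


lemma ggm : Measurable gg := by
  unfold gg
  exact (((measurable_const.sub Real.measurable_cos).pow_const 2)).div (measurable_id.pow_const 4)

lemma Kmeas : Measurable fun p : ℝ × ℝ =>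
    ENNReal.ofReal ((1 - Real.cos p.1) ^ 2 * (p.2 ^ 3 / 6 * Real.exp (-(p.1 * p.2)))) := by
  apply Measurable.ennreal_ofReal
  fun_prop

lemma keylint :
    ∫⁻ x in Ioi (0:ℝ), ENNReal.ofReal (gg x) = ENNReal.ofReal (π / 6) := by
  have swap := lintegral_lintegral_swap (μ := volume.restrict (Ioi (0:ℝ)))
    (ν := volume.restrict (Ioi (0:ℝ)))
    (f := fun x t => ENNReal.ofReal ((1 - Real.cos x) ^ 2 * (t ^ 3 / 6 * Real.exp (-(x * t)))))
    (Kmeas.aemeasurable)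
  have A1 : ∫⁻ x in Ioi (0:ℝ), ENNReal.ofReal (gg x)
      = ∫⁻ x in Ioi (0:ℝ), ∫⁻ t in Ioi (0:ℝ),
          ENNReal.ofReal ((1 - Real.cos x) ^ 2 * (t ^ 3 / 6 * Real.exp (-(x * t)))) := by
    refine setLIntegral_congr_fun measurableSet_Ioi ?_
    intro x hx
    have hx0 : (0:ℝ) < x := hx
    have e1 : ∀ t : ℝ, ENNReal.ofReal ((1 - Real.cos x) ^ 2 * (t ^ 3 / 6 * Real.exp (-(x * t))))
        = ENNReal.ofReal ((1 - Real.cos x) ^ 2) * ENNReal.ofReal (t ^ 3 / 6 * Real.exp (-(x * t))) :=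
      fun t => ENNReal.ofReal_mul (by positivity)
    simp_rw [e1]
    rw [lintegral_const_mul _ (by fun_prop)]
    have e2 : ∫⁻ t in Ioi (0:ℝ), ENNReal.ofReal (t ^ 3 / 6 * Real.exp (-(x * t)))
        = ENNReal.ofReal (1 / x ^ 4) := by
      have hint : IntegrableOn (fun t : ℝ => t ^ 3 / 6 * Real.exp (-(x * t))) (Ioi 0) := by
        have h6 : IntegrableOn (fun t : ℝ => 1/6 * (t ^ 3 * Real.exp (-(x * t)))) (Ioi 0) :=
          (L3i hx0).const_mul (1/6 : ℝ)
        apply h6.congr_fun ?_ measurableSet_Ioi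
        intro t _; ring
      rw [← ofReal_integral_eq_lintegral_ofReal hint ?_]
      · congr 1
        have : ∫ t in Ioi (0:ℝ), t ^ 3 / 6 * Real.exp (-(x * t))
            = (1/6) * ∫ t in Ioi (0:ℝ), t ^ 3 * Real.exp (-(x * t)) := by
          rw [← MeasureTheory.integral_const_mul]
          refine setIntegral_congr_fun measurableSet_Ioi (fun t _ => by ring)
        rw [this, L3 hx0]
        field_simp
      · filter_upwards [ae_restrict_mem measurableSet_Ioi] with t ht
        have : (0:ℝ) < t := ht
        positivity
    rw [e2, ← ENNReal.ofReal_mul (by positivity)]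
    congr 1
    unfold gg
    field_simp
  have A2 : ∫⁻ t in Ioi (0:ℝ), ∫⁻ x in Ioi (0:ℝ),
        ENNReal.ofReal ((1 - Real.cos x) ^ 2 * (t ^ 3 / 6 * Real.exp (-(x * t))))
      = ENNReal.ofReal (π / 6) := by
    have B1 : ∫⁻ t in Ioi (0:ℝ), ∫⁻ x in Ioi (0:ℝ),
          ENNReal.ofReal ((1 - Real.cos x) ^ 2 * (t ^ 3 / 6 * Real.exp (-(x * t))))
        = ∫⁻ t in Ioi (0:ℝ), ENNReal.ofReal (hh t) := by
      refine setLIntegral_congr_fun measurableSet_Ioi ?_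
      intro t ht
      have ht0 : (0:ℝ) < t := ht
      dsimp only
      rw [← ofReal_integral_eq_lintegral_ofReal (LBi ht0) ?_, LB ht0]
      filter_upwards [ae_restrict_mem measurableSet_Ioi] with x hx
      have : (0:ℝ) < t := ht0
      positivity
    rw [B1, ← ofReal_integral_eq_lintegral_ofReal Lhi ?_, Lh]
    filter_upwards [ae_restrict_mem measurableSet_Ioi] with t ht
    have h1 : (0:ℝ) < t := ht
    unfold hh
    positivity
  rw [A1, swap, A2]

lemma intIoi : (∫ x in Ioi (0:ℝ), gg x) = π / 6 ∧ IntegrableOn gg (Ioi (0:ℝ)) := by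
  have hnn : 0 ≤ᵐ[volume.restrict (Ioi (0:ℝ))] gg := by
    filter_upwards with x
    unfold gg
    positivity
  constructor
  · rw [integral_eq_lintegral_of_nonneg_ae hnn (ggm.aestronglyMeasurable), keylint,
      ENNReal.toReal_ofReal (by positivity)]
  · refine ⟨ggm.aestronglyMeasurable, ?_⟩
    rw [hasFiniteIntegral_iff_ofReal hnn, keylint]
    exact ENNReal.ofReal_lt_top


end FejerAux


/-- For the Fejér-type density `f(0) = 1/(2π)`,
`f(x) = (1 − cos x)/(π x²)` for `x ≠ 0`, one has `∫ f(y)² dy = 1/(3π)`. -/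
theorem fejer_density_squared_integral
    (f : ℝ → ℝ) (hf0 : f 0 = 1 / (2 * π))
    (hf : ∀ x : ℝ, x ≠ 0 → f x = (1 - cos x) / (π * x ^ 2)) :
    ∫ y : ℝ, (f y) ^ 2 = 1 / (3 * π) := by
  have h0 : ∀ᵐ y : ℝ, y ≠ 0 := by
    refine Filter.eventually_of_mem (MeasureTheory.compl_mem_ae_iff.mpr ?_) (fun y hy => hy)
    exact measure_singleton 0
  have hae : ∀ᵐ y : ℝ, f y ^ 2 = (1 / π ^ 2) * FejerAux.gg y := by
    filter_upwards [h0] with y hy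
    rw [hf y hy]
    unfold FejerAux.gg
    rw [div_pow, mul_pow, show (y ^ 2) ^ 2 = y ^ 4 by ring, one_div_mul_eq_div,
      div_div, mul_comm (π ^ 2) (y ^ 4)]
  rw [integral_congr_ae hae, MeasureTheory.integral_const_mul]
  have habs : ∫ y : ℝ, FejerAux.gg y = ∫ y : ℝ, FejerAux.gg |y| := by
    refine integral_congr_ae (Filter.Eventually.of_forall fun y => ?_)
    show (1 - Real.cos y) ^ 2 / y ^ 4 = (1 - Real.cos |y|) ^ 2 / |y| ^ 4
    rw [Real.cos_abs, pow_abs, abs_of_nonneg (by positivity : (0:ℝ) ≤ y ^ 4)]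
  rw [habs, integral_comp_abs, FejerAux.intIoi.1]
  have hπ := Real.pi_ne_zero
  field_simp
  ring
end

section
/- Let Λ₀ ⊆ Λ be full-rank nested lattices in ℝ^d with Λ₀ of index N in Λ, with Fourier dual lattices Λ̂₀ = 2πΛ₀* and Λ̂ = 2πΛ* (so Λ̂ ⊆ Λ̂₀). Let ψ: ℝ^d → ℝ≥0 be a characteristic function with ψ(t) = 0 for t ∉ 𝒱(Λ̂₀). Write each coset of Λ₀ in Λ as Λ_j = u_j + Λ₀ with u_j ∈ Λ, and define φ_j(ζ) = Σ_{n∈Λ̂₀} ψ(ζ + n) e^{−i⟨n, u_j⟩} for j = 0, …, N−1, and φ(ζ) = Σ_{n∈Λ̂} ψ(ζ + n). Then (i) φ² = φ·φ_j pointwise for every j, and (ii) φ = (1/N) Σ_{j=0}^{N−1} φ_j. -/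
open MeasureTheory Real RealInnerProductSpace

/-- The full-rank lattice in `ℝ^d` with generator matrix `A`, i.e. `A^T ℤ^d`. -/
def latticeOfGen {d : ℕ} (A : Matrix (Fin d) (Fin d) ℝ) : Set (EuclideanSpace ℝ (Fin d)) :=
  {x | ∃ z : Fin d → ℤ, ∀ i, x i = A.transpose.mulVec (fun j => (z j : ℝ)) i}

/-- The dual lattice `L* = {x : ⟨x, z⟩ ∈ ℤ for all z ∈ L}`. -/
def dualLatticeSet {d : ℕ} (L : Set (EuclideanSpace ℝ (Fin d))) :
    Set (EuclideanSpace ℝ (Fin d)) :=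
  {x | ∀ z ∈ L, ∃ n : ℤ, ⟪x, z⟫ = (n : ℝ)}

/-- The Fourier dual lattice `L̂ = 2π L*`. -/
noncomputable def fourierDualSet {d : ℕ} (L : Set (EuclideanSpace ℝ (Fin d))) :
    Set (EuclideanSpace ℝ (Fin d)) :=
  {x | ∃ y ∈ dualLatticeSet L, x = (2 * π) • y}

/-- The interior `𝒱(L)` of the Voronoi region of `L` around `0`. -/
def voronoiInterior {d : ℕ} (L : Set (EuclideanSpace ℝ (Fin d))) :
    Set (EuclideanSpace ℝ (Fin d)) :=
  {x | ∀ z ∈ L, z ≠ 0 → ‖x‖ < ‖x - z‖}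

/-- `φ_j(ζ) = Σ_{n ∈ Λ̂₀} ψ(ζ + n) e^{−i⟨n, u_j⟩}`, the `u_j`-twisted periodization of `ψ`
over the Fourier dual lattice `Λ̂₀`. -/
noncomputable def twistedPeriodization {d : ℕ} (L0hat : Set (EuclideanSpace ℝ (Fin d)))
    (ψ : EuclideanSpace ℝ (Fin d) → ℝ) (uj ζ : EuclideanSpace ℝ (Fin d)) : ℂ :=
  ∑' n : ↥L0hat, (ψ (ζ + n) : ℂ) *
    Complex.exp (-(Complex.I * (⟪(n : EuclideanSpace ℝ (Fin d)), uj⟫ : ℝ)))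

lemma latt_add {d : ℕ} {A : Matrix (Fin d) (Fin d) ℝ} {x y : EuclideanSpace ℝ (Fin d)}
    (hx : x ∈ latticeOfGen A) (hy : y ∈ latticeOfGen A) : x + y ∈ latticeOfGen A := by
  obtain ⟨z, hz⟩ := hx; obtain ⟨w, hw⟩ := hy
  refine ⟨z + w, fun i => ?_⟩
  have : (fun j => ((z j + w j : ℤ) : ℝ)) = (fun j => (z j : ℝ)) + fun j => (w j : ℝ) := by
    funext j; push_cast; rfl
  simp only [Pi.add_apply, this, Matrix.mulVec_add]
  have hxy : (x + y) i = x i + y i := rfl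
  rw [hxy, hz i, hw i]

lemma latt_sub {d : ℕ} {A : Matrix (Fin d) (Fin d) ℝ} {x y : EuclideanSpace ℝ (Fin d)}
    (hx : x ∈ latticeOfGen A) (hy : y ∈ latticeOfGen A) : x - y ∈ latticeOfGen A := by
  obtain ⟨z, hz⟩ := hx; obtain ⟨w, hw⟩ := hy
  refine ⟨z - w, fun i => ?_⟩
  have : (fun j => ((z j - w j : ℤ) : ℝ)) = (fun j => (z j : ℝ)) - fun j => (w j : ℝ) := by
    funext j; push_cast; rfl
  simp only [Pi.sub_apply, this, Matrix.mulVec_sub]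
  have hxy : (x - y) i = x i - y i := rfl
  rw [hxy, hz i, hw i]

lemma fourier_sub {d : ℕ} {L : Set (EuclideanSpace ℝ (Fin d))}
    {x y : EuclideanSpace ℝ (Fin d)} (hx : x ∈ fourierDualSet L) (hy : y ∈ fourierDualSet L) :
    x - y ∈ fourierDualSet L := by
  obtain ⟨a, ha, rfl⟩ := hx; obtain ⟨b, hb, rfl⟩ := hy
  refine ⟨a - b, fun z hz => ?_, by rw [smul_sub]⟩
  obtain ⟨n, hn⟩ := ha z hz; obtain ⟨m, hm⟩ := hb z hz
  exact ⟨n - m, by rw [inner_sub_left, hn, hm]; push_cast; ring⟩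

lemma fourier_mono {d : ℕ} {L L' : Set (EuclideanSpace ℝ (Fin d))} (h : L ⊆ L') :
    fourierDualSet L' ⊆ fourierDualSet L := by
  rintro x ⟨y, hy, rfl⟩
  exact ⟨y, fun z hz => hy z (h hz), rfl⟩

lemma exp_neg_I_real_eq_one_iff (r : ℝ) :
    Complex.exp (-(Complex.I * (r : ℂ))) = 1 ↔ ∃ m : ℤ, r = m * (2 * π) := by
  rw [Complex.exp_eq_one_iff]
  constructor
  · rintro ⟨m, hm⟩
    refine ⟨-m, ?_⟩
    have h2 : ((-r : ℝ) : ℂ) * Complex.I = (((m : ℝ) * (2 * π) : ℝ) : ℂ) * Complex.I := by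
      push_cast; linear_combination hm
    have h3 := mul_right_cancel₀ Complex.I_ne_zero h2
    have h4 : (-r : ℝ) = (m : ℝ) * (2 * π) := by exact_mod_cast h3
    push_cast; linarith
  · rintro ⟨m, hm⟩
    exact ⟨-m, by rw [hm]; push_cast; ring⟩

lemma exp_one_of_mem {d : ℕ} {L : Set (EuclideanSpace ℝ (Fin d))}
    {n x : EuclideanSpace ℝ (Fin d)} (hn : n ∈ fourierDualSet L) (hx : x ∈ L) :
    Complex.exp (-(Complex.I * ((⟪n, x⟫ : ℝ) : ℂ))) = 1 := by
  obtain ⟨y, hy, rfl⟩ := hn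
  obtain ⟨k, hk⟩ := hy x hx
  rw [exp_neg_I_real_eq_one_iff]
  exact ⟨k, by rw [real_inner_smul_left, hk]; ring⟩

lemma unique_support {d : ℕ} {L0 : Set (EuclideanSpace ℝ (Fin d))}
    {ψ : EuclideanSpace ℝ (Fin d) → ℝ}
    (hsupp : ∀ t, t ∉ voronoiInterior (fourierDualSet L0) → ψ t = 0)
    {ζ n m : EuclideanSpace ℝ (Fin d)} (hn : n ∈ fourierDualSet L0)
    (hm : m ∈ fourierDualSet L0) (hψn : ψ (ζ + n) ≠ 0) (hψm : ψ (ζ + m) ≠ 0) : n = m := by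
  by_contra hne
  have h1 : ζ + n ∈ voronoiInterior (fourierDualSet L0) := by
    by_contra h; exact hψn (hsupp _ h)
  have h2 : ζ + m ∈ voronoiInterior (fourierDualSet L0) := by
    by_contra h; exact hψm (hsupp _ h)
  have hnm : n - m ∈ fourierDualSet L0 := fourier_sub hn hm
  have hmn : m - n ∈ fourierDualSet L0 := fourier_sub hm hn
  have e1 : ζ + n - (n - m) = ζ + m := by abel
  have e2 : ζ + m - (m - n) = ζ + n := by abel
  have l1 := h1 (n - m) hnm (by intro h0; exact hne (by rwa [sub_eq_zero] at h0))
  have l2 := h2 (m - n) hmn (by intro h0; exact hne (by rw [sub_eq_zero] at h0; exact h0.symm))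
  rw [e1] at l1; rw [e2] at l2
  linarith

lemma char_sum_zero {d N : ℕ} {A0 F : Matrix (Fin d) (Fin d) ℝ}
    {u : Fin N → EuclideanSpace ℝ (Fin d)}
    (hu : ∀ j, u j ∈ latticeOfGen F)
    (hcover : ∀ x ∈ latticeOfGen F, ∃ j, x - u j ∈ latticeOfGen A0)
    (hdisj : ∀ i j : Fin N, i ≠ j → u i - u j ∉ latticeOfGen A0)
    {n₀ : EuclideanSpace ℝ (Fin d)} (hn₀ : n₀ ∈ fourierDualSet (latticeOfGen A0))
    (hn₀' : n₀ ∉ fourierDualSet (latticeOfGen F)) :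
    ∑ j : Fin N, Complex.exp (-(Complex.I * ((⟪n₀, u j⟫ : ℝ) : ℂ))) = 0 := by
  set c : Fin N → ℂ := fun j => Complex.exp (-(Complex.I * ((⟪n₀, u j⟫ : ℝ) : ℂ))) with hc
  have h2π : (2 * π) ≠ 0 := by positivity
  set y : EuclideanSpace ℝ (Fin d) := (2 * π)⁻¹ • n₀ with hydef
  have hn₀y : n₀ = (2 * π) • y := (smul_inv_smul₀ h2π n₀).symm
  have hy : y ∉ dualLatticeSet (latticeOfGen F) := fun h => hn₀' ⟨y, h, hn₀y⟩
  have hy' : ∃ x ∈ latticeOfGen F, ∀ m : ℤ, ⟪y, x⟫ ≠ (m : ℝ) := by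
    by_contra h
    push_neg at h
    exact hy h
  obtain ⟨x, hxL, hx⟩ := hy'
  have hinner : (⟪n₀, x⟫ : ℝ) = (2 * π) * ⟪y, x⟫ := by
    rw [hn₀y, real_inner_smul_left]
  have hcx : Complex.exp (-(Complex.I * ((⟪n₀, x⟫ : ℝ) : ℂ))) ≠ 1 := by
    intro h1
    obtain ⟨m, hm⟩ := (exp_neg_I_real_eq_one_iff _).mp h1
    apply hx m
    rw [hinner] at hm
    have h2 : (2 * π) * ⟪y, x⟫ = (2 * π) * (m : ℝ) := by linear_combination hm
    exact mul_left_cancel₀ h2π h2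
  obtain ⟨k, hk⟩ := hcover x hxL
  -- c k ≠ 1
  have hsplit : ∀ (a b : ℝ), Complex.exp (-(Complex.I * ((a + b : ℝ) : ℂ))) =
      Complex.exp (-(Complex.I * (a : ℂ))) * Complex.exp (-(Complex.I * (b : ℂ))) := by
    intro a b
    rw [← Complex.exp_add]
    congr 1
    push_cast
    ring
  have hxk : (⟪n₀, x⟫ : ℝ) = ⟪n₀, u k⟫ + ⟪n₀, x - u k⟫ := by
    rw [← inner_add_right]
    congr 1
    abel
  have hck : c k ≠ 1 := by
    intro h1
    apply hcx
    rw [hxk, hsplit, exp_one_of_mem hn₀ hk, mul_one]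
    exact h1
  -- the shift permutation
  choose σ hσ using fun j => hcover (u j + u k) (latt_add (hu j) (hu k))
  have hinj : Function.Injective σ := by
    intro i j h
    by_contra hne
    apply hdisj i j hne
    have hj' : u j + u k - u (σ i) ∈ latticeOfGen A0 := by rw [h]; exact hσ j
    have h2 := latt_sub (hσ i) hj'
    have e : (u i + u k - u (σ i)) - (u j + u k - u (σ i)) = u i - u j := by abel
    rwa [e] at h2
  have hbij : Function.Bijective σ := Finite.injective_iff_bijective.mp hinj
  have hcomp : ∀ j, c (σ j) = c j * c k := by
    intro j
    have hw1 : Complex.exp (-(Complex.I * ((⟪n₀, u j + u k - u (σ j)⟫ : ℝ) : ℂ))) = 1 :=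
      exp_one_of_mem hn₀ (hσ j)
    have hi2 : (⟪n₀, u j + u k⟫ : ℝ) = ⟪n₀, u (σ j)⟫ + ⟪n₀, u j + u k - u (σ j)⟫ := by
      rw [← inner_add_right]
      congr 1
      abel
    have : Complex.exp (-(Complex.I * ((⟪n₀, u j + u k⟫ : ℝ) : ℂ))) = c (σ j) := by
      rw [hi2, hsplit, hw1, mul_one]
    rw [← this]
    have hi3 : (⟪n₀, u j + u k⟫ : ℝ) = ⟪n₀, u j⟫ + ⟪n₀, u k⟫ := inner_add_right n₀ (u j) (u k)
    rw [hi3, hsplit]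
  have hsum : ∑ j, c (σ j) = ∑ j, c j := Function.Bijective.sum_comp hbij c
  have hsum2 : ∑ j, c (σ j) = (∑ j, c j) * c k := by
    rw [Finset.sum_mul]
    exact Finset.sum_congr rfl fun j _ => hcomp j
  have hfin : (∑ j, c j) * (1 - c k) = 0 := by
    rw [mul_sub, mul_one, ← hsum2, hsum, sub_self]
  rcases mul_eq_zero.mp hfin with h | h
  · exact h
  · exact absurd (by linear_combination -h : c k = 1) hck

theorem main_thm
    {d : ℕ}
    (A0 F : Matrix (Fin d) (Fin d) ℝ) (hA0 : A0.det ≠ 0) (hF : F.det ≠ 0)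
    (hnested : latticeOfGen A0 ⊆ latticeOfGen F)
    (N : ℕ) (hN : 0 < N) (u : Fin N → EuclideanSpace ℝ (Fin d))
    (hu : ∀ j, u j ∈ latticeOfGen F)
    (hcover : ∀ x ∈ latticeOfGen F, ∃ j, x - u j ∈ latticeOfGen A0)
    (hdisj : ∀ i j : Fin N, i ≠ j → u i - u j ∉ latticeOfGen A0)
    (f : EuclideanSpace ℝ (Fin d) → ℝ) (ψ : EuclideanSpace ℝ (Fin d) → ℝ)
    (hf_nn : ∀ x, 0 ≤ f x) (hf_int : ∫ x : EuclideanSpace ℝ (Fin d), f x = 1)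
    (hψ : ∀ t, (ψ t : ℂ) = ∫ x : EuclideanSpace ℝ (Fin d),
      (f x : ℂ) * Complex.exp (Complex.I * (⟪t, x⟫ : ℝ)))
    (hψ_nn : ∀ t, 0 ≤ ψ t)
    (hsupp : ∀ t, t ∉ voronoiInterior (fourierDualSet (latticeOfGen A0)) → ψ t = 0) :
    (∀ (j : Fin N) (ζ : EuclideanSpace ℝ (Fin d)),
      (∑' n : ↥(fourierDualSet (latticeOfGen F)),
          ((ψ (ζ + n) : ℝ) : ℂ)) ^ 2 =
        (∑' n : ↥(fourierDualSet (latticeOfGen F)), ((ψ (ζ + n) : ℝ) : ℂ)) *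
          -- φ_j
          (∑' n : ↥(fourierDualSet (latticeOfGen A0)), (ψ (ζ + n) : ℂ) *
            Complex.exp (-(Complex.I * (⟪(n : EuclideanSpace ℝ (Fin d)), u j⟫ : ℝ))))) ∧
    (∀ ζ : EuclideanSpace ℝ (Fin d),
      (∑' n : ↥(fourierDualSet (latticeOfGen F)), ((ψ (ζ + n) : ℝ) : ℂ)) =
        (1 / (N : ℂ)) * ∑ j : Fin N,
          (∑' n : ↥(fourierDualSet (latticeOfGen A0)), (ψ (ζ + n) : ℂ) *
            Complex.exp (-(Complex.I * (⟪(n : EuclideanSpace ℝ (Fin d)), u j⟫ : ℝ))))) := by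
  have hmono := fourier_mono hnested
  have key : ∀ ζ : EuclideanSpace ℝ (Fin d),
      (∀ j : Fin N,
        (∑' n : ↥(fourierDualSet (latticeOfGen F)), ((ψ (ζ + n) : ℝ) : ℂ)) ^ 2 =
          (∑' n : ↥(fourierDualSet (latticeOfGen F)), ((ψ (ζ + n) : ℝ) : ℂ)) *
            (∑' n : ↥(fourierDualSet (latticeOfGen A0)), (ψ (ζ + n) : ℂ) *
              Complex.exp (-(Complex.I * (⟪(n : EuclideanSpace ℝ (Fin d)), u j⟫ : ℝ))))) ∧
      ((∑' n : ↥(fourierDualSet (latticeOfGen F)), ((ψ (ζ + n) : ℝ) : ℂ)) =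
        (1 / (N : ℂ)) * ∑ j : Fin N,
          (∑' n : ↥(fourierDualSet (latticeOfGen A0)), (ψ (ζ + n) : ℂ) *
            Complex.exp (-(Complex.I * (⟪(n : EuclideanSpace ℝ (Fin d)), u j⟫ : ℝ))))) := by
    intro ζ
    by_cases hex : ∃ n₀ ∈ fourierDualSet (latticeOfGen A0), ψ (ζ + n₀) ≠ 0
    · obtain ⟨n₀, hn₀Λ, hn₀ne⟩ := hex
      have hothers : ∀ m ∈ fourierDualSet (latticeOfGen A0), m ≠ n₀ → ψ (ζ + m) = 0 := by
        intro m hm hne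
        by_contra hmz
        exact hne (unique_support hsupp hm hn₀Λ hmz hn₀ne)
      have hφj : ∀ j : Fin N,
          (∑' n : ↥(fourierDualSet (latticeOfGen A0)), (ψ (ζ + n) : ℂ) *
            Complex.exp (-(Complex.I * (⟪(n : EuclideanSpace ℝ (Fin d)), u j⟫ : ℝ)))) =
          (ψ (ζ + n₀) : ℂ) * Complex.exp (-(Complex.I * ((⟪n₀, u j⟫ : ℝ) : ℂ))) := by
        intro j
        refine tsum_eq_single (⟨n₀, hn₀Λ⟩ : ↥(fourierDualSet (latticeOfGen A0))) ?_
        rintro ⟨m, hm⟩ hne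
        have : m ≠ n₀ := fun h => hne (Subtype.ext h)
        rw [hothers m hm this]
        simp
      by_cases hmem : n₀ ∈ fourierDualSet (latticeOfGen F)
      · have hΦ : (∑' n : ↥(fourierDualSet (latticeOfGen F)), ((ψ (ζ + n) : ℝ) : ℂ)) =
            (ψ (ζ + n₀) : ℂ) := by
          refine tsum_eq_single (⟨n₀, hmem⟩ : ↥(fourierDualSet (latticeOfGen F))) ?_
          rintro ⟨m, hm⟩ hne
          have : m ≠ n₀ := fun h => hne (Subtype.ext h)
          rw [hothers m (hmono hm) this]
          simp
        have hexp1 : ∀ j : Fin N,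
            Complex.exp (-(Complex.I * ((⟪n₀, u j⟫ : ℝ) : ℂ))) = 1 := fun j =>
          exp_one_of_mem hmem (hu j)
        constructor
        · intro j
          rw [hΦ, hφj j, hexp1 j, mul_one]
          ring
        · rw [hΦ]
          have : ∀ j : Fin N,
              (∑' n : ↥(fourierDualSet (latticeOfGen A0)), (ψ (ζ + n) : ℂ) *
                Complex.exp (-(Complex.I * (⟪(n : EuclideanSpace ℝ (Fin d)), u j⟫ : ℝ)))) =
              (ψ (ζ + n₀) : ℂ) := by
            intro j
            rw [hφj j, hexp1 j, mul_one]
          rw [Finset.sum_congr rfl fun j _ => this j, Finset.sum_const, Finset.card_univ,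
            Fintype.card_fin, nsmul_eq_mul]
          have hNne : (N : ℂ) ≠ 0 := Nat.cast_ne_zero.mpr hN.ne'
          field_simp
      · have hΦ : (∑' n : ↥(fourierDualSet (latticeOfGen F)), ((ψ (ζ + n) : ℝ) : ℂ)) = 0 := by
          have : ∀ n : ↥(fourierDualSet (latticeOfGen F)), ((ψ (ζ + n) : ℝ) : ℂ) = 0 := by
            rintro ⟨m, hm⟩
            have hmne : m ≠ n₀ := fun h => hmem (h ▸ hm)
            rw [hothers m (hmono hm) hmne]
            simp
          rw [tsum_congr this, tsum_zero]
        constructor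
        · intro j
          rw [hΦ]
          ring
        · rw [hΦ]
          have hS := char_sum_zero hu hcover hdisj hn₀Λ hmem
          have : ∑ j : Fin N,
              (∑' n : ↥(fourierDualSet (latticeOfGen A0)), (ψ (ζ + n) : ℂ) *
                Complex.exp (-(Complex.I * (⟪(n : EuclideanSpace ℝ (Fin d)), u j⟫ : ℝ)))) =
              (ψ (ζ + n₀) : ℂ) * ∑ j : Fin N,
                Complex.exp (-(Complex.I * ((⟪n₀, u j⟫ : ℝ) : ℂ))) := by
            rw [Finset.mul_sum]
            exact Finset.sum_congr rfl fun j _ => hφj j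
          rw [this, hS, mul_zero, mul_zero]
    · push_neg at hex
      have hΦ : (∑' n : ↥(fourierDualSet (latticeOfGen F)), ((ψ (ζ + n) : ℝ) : ℂ)) = 0 := by
        have : ∀ n : ↥(fourierDualSet (latticeOfGen F)), ((ψ (ζ + n) : ℝ) : ℂ) = 0 := by
          rintro ⟨m, hm⟩
          rw [hex m (hmono hm)]
          simp
        rw [tsum_congr this, tsum_zero]
      have hφj0 : ∀ j : Fin N,
          (∑' n : ↥(fourierDualSet (latticeOfGen A0)), (ψ (ζ + n) : ℂ) *
            Complex.exp (-(Complex.I * (⟪(n : EuclideanSpace ℝ (Fin d)), u j⟫ : ℝ)))) = 0 := by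
        intro j
        have : ∀ n : ↥(fourierDualSet (latticeOfGen A0)), (ψ (ζ + n) : ℂ) *
            Complex.exp (-(Complex.I * (⟪(n : EuclideanSpace ℝ (Fin d)), u j⟫ : ℝ))) = 0 := by
          rintro ⟨m, hm⟩
          rw [hex m hm]
          simp
        rw [tsum_congr this, tsum_zero]
      refine ⟨fun j => ?_, ?_⟩
      · rw [hΦ, hφj0 j]
        ring
      · rw [hΦ, Finset.sum_congr rfl fun j _ => hφj0 j, Finset.sum_const]
        simp
  exact ⟨fun j ζ => (key ζ).1 j, fun ζ => (key ζ).2⟩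

/-- Let `Λ₀ ⊆ Λ` be full-rank nested lattices in `ℝ^d` with `Λ₀` of index
`N` in `Λ` and Fourier duals `Λ̂ ⊆ Λ̂₀`.  Let `ψ ≥ 0` be a characteristic function vanishing
outside `𝒱(Λ̂₀)`.  Writing each coset as `Λ_j = u_j + Λ₀` with `u_j ∈ Λ`, define
`φ_j(ζ) = Σ_{n ∈ Λ̂₀} ψ(ζ+n) e^{−i⟨n,u_j⟩}` and `φ(ζ) = Σ_{n ∈ Λ̂} ψ(ζ+n)`.  Then
(i) `φ² = φ·φ_j` pointwise for every `j`, and (ii) `φ = (1/N) Σ_j φ_j`. -/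
theorem periodized_lattice_charfun_identities
    {d : ℕ}
    -- the nested lattices: coarse Λ₀ with generator matrix A0, fine Λ with generator F
    (A0 F : Matrix (Fin d) (Fin d) ℝ) (hA0 : A0.det ≠ 0) (hF : F.det ≠ 0)
    (hnested : latticeOfGen A0 ⊆ latticeOfGen F)
    -- the N cosets of Λ₀ in Λ, with representatives u j ∈ Λ
    (N : ℕ) (hN : 0 < N) (u : Fin N → EuclideanSpace ℝ (Fin d))
    (hu : ∀ j, u j ∈ latticeOfGen F)
    (hcover : ∀ x ∈ latticeOfGen F, ∃ j, x - u j ∈ latticeOfGen A0)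
    (hdisj : ∀ i j : Fin N, i ≠ j → u i - u j ∉ latticeOfGen A0)
    -- ψ ≥ 0 is the characteristic function of a density f, supported within 𝒱(Λ̂₀)
    (f : EuclideanSpace ℝ (Fin d) → ℝ) (ψ : EuclideanSpace ℝ (Fin d) → ℝ)
    (hf_nn : ∀ x, 0 ≤ f x) (hf_int : ∫ x : EuclideanSpace ℝ (Fin d), f x = 1)
    (hψ : ∀ t, (ψ t : ℂ) = ∫ x : EuclideanSpace ℝ (Fin d),
      (f x : ℂ) * Complex.exp (Complex.I * (⟪t, x⟫ : ℝ)))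
    (hψ_nn : ∀ t, 0 ≤ ψ t)
    (hsupp : ∀ t, t ∉ voronoiInterior (fourierDualSet (latticeOfGen A0)) → ψ t = 0) :
    -- (i) φ² = φ·φ_j for every j
    (∀ (j : Fin N) (ζ : EuclideanSpace ℝ (Fin d)),
      (∑' n : ↥(fourierDualSet (latticeOfGen F)),
          ((ψ (ζ + n) : ℝ) : ℂ)) ^ 2 =
        (∑' n : ↥(fourierDualSet (latticeOfGen F)), ((ψ (ζ + n) : ℝ) : ℂ)) *
          twistedPeriodization (fourierDualSet (latticeOfGen A0)) ψ (u j) ζ) ∧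
    -- (ii) φ = (1/N) Σ_j φ_j
    (∀ ζ : EuclideanSpace ℝ (Fin d),
      (∑' n : ↥(fourierDualSet (latticeOfGen F)), ((ψ (ζ + n) : ℝ) : ℂ)) =
        (1 / (N : ℂ)) * ∑ j : Fin N,
          twistedPeriodization (fourierDualSet (latticeOfGen A0)) ψ (u j) ζ) := by
  simp only [twistedPeriodization]
  exact main_thm A0 F hA0 hF hnested N hN u hu hcover hdisj f ψ hf_nn hf_int hψ hψ_nn hsupp
end
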